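/- arXiv:2104.14530 — 2 statements merged into one kernel-verified Lean document; each statement's English description precedes it below -/
import Mathlib

section
/- Let σ ∈ B(n) have cycle type (ρ⁺, ρ⁻). Then the reflection length of σ, i.e. the minimal number k such that σ = r₁⋯r_k with all r_i ∈ R = R₊ ∪ R₋, equals ‖ρ⁺‖ + |ρ⁻|. -/
/-!
STATEMENT 0: reflection length in the hyperoctahedral group B(n) equals ‖ρ⁺‖ + |ρ⁻|.
-/

noncomputable section
set_option synthInstance.maxHeartbeats 1000000
set_option maxHeartbeats 1000000

namespace TypeB

/-- The nontrivial orbits (cycles) of a permutation. -/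
def ntOrbits {X : Type*} (σ : Equiv.Perm X) : Set (Set X) :=
  {O | ∃ i : X, σ i ≠ i ∧ O = {j | σ.SameCycle i j}}

/-- Negation of a set of integers. -/
def negSet (B : Set ℤ) : Set ℤ := (fun x : ℤ => -x) '' B

/-- The negative cycles (orbits invariant under negation). -/
def negOrbits (σ : Equiv.Perm ℤ) : Set (Set ℤ) := {O ∈ ntOrbits σ | negSet O = O}

/-- The positive cycles (orbits not invariant under negation; they come in mirror pairs). -/
def posOrbits (σ : Equiv.Perm ℤ) : Set (Set ℤ) := {O ∈ ntOrbits σ | negSet O ≠ O}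

/-- ‖ρ⁺‖, where ρ⁺ is the partition formed by the common lengths of the mirror pairs of
positive cycles (including fixed-point pairs, which contribute parts 1 and do not change
the statistic). -/
def normPlus (σ : Equiv.Perm ℤ) : ℕ := (∑ᶠ O ∈ posOrbits σ, (O.ncard - 1)) / 2

/-- |ρ⁻|, where ρ⁻ is the partition formed by the half-lengths of the negative cycles. -/
def sizeMinus (σ : Equiv.Perm ℤ) : ℕ := ∑ᶠ O ∈ negOrbits σ, O.ncard / 2

/-- The hyperoctahedral group B(n), realized as permutations of ℤ commuting with negation
and fixing every integer of absolute value bigger than n (hence fixing 0). -/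
def Bset (n : ℕ) : Set (Equiv.Perm ℤ) :=
  {σ | (∀ i : ℤ, σ (-i) = -σ i) ∧ ∀ i : ℤ, (n : ℤ) < |i| → σ i = i}

/-- Long reflections of B(n): (i j)(−i −j) with i,j ∈ [±n], |i| ≠ |j|. -/
def IsLongRefl (n : ℕ) (r : Equiv.Perm ℤ) : Prop :=
  ∃ i j : ℤ, i ≠ 0 ∧ j ≠ 0 ∧ |i| ≤ (n : ℤ) ∧ |j| ≤ (n : ℤ) ∧ |i| ≠ |j| ∧
    r = Equiv.swap i j * Equiv.swap (-i) (-j)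

/-- Short reflections of B(n): (i −i) with 1 ≤ i ≤ n. -/
def IsShortRefl (n : ℕ) (r : Equiv.Perm ℤ) : Prop :=
  ∃ i : ℤ, 0 < i ∧ i ≤ (n : ℤ) ∧ r = Equiv.swap i (-i)

/-- Reflections of B(n). -/
def IsRefl (n : ℕ) (r : Equiv.Perm ℤ) : Prop := IsLongRefl n r ∨ IsShortRefl n r

variable {n : ℕ} {σ τ : Equiv.Perm ℤ}

lemma Bzero (hσ : σ ∈ Bset n) : σ 0 = 0 := by
  have := hσ.1 0
  simp only [neg_zero] at this
  omega

lemma one_mem_B : (1 : Equiv.Perm ℤ) ∈ Bset n := ⟨fun i => rfl, fun i _ => rfl⟩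

lemma mul_mem_B (hσ : σ ∈ Bset n) (hτ : τ ∈ Bset n) : σ * τ ∈ Bset n := by
  refine ⟨fun i => ?_, fun i hi => ?_⟩
  · simp [Equiv.Perm.mul_apply, hτ.1 i, hσ.1 (τ i)]
  · simp [Equiv.Perm.mul_apply, hτ.2 i hi, hσ.2 i hi]

lemma odd_inv (h : ∀ x : ℤ, σ (-x) = -σ x) : ∀ x : ℤ, σ⁻¹ (-x) = -σ⁻¹ x := by
  intro x
  apply σ.injective
  rw [Equiv.Perm.inv_def, Equiv.apply_symm_apply, h, Equiv.apply_symm_apply]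

lemma inv_mem_B (hσ : σ ∈ Bset n) : σ⁻¹ ∈ Bset n := by
  refine ⟨odd_inv hσ.1, fun i hi => ?_⟩
  have := hσ.2 i hi
  conv_lhs => rw [← this]
  exact σ.symm_apply_apply i

lemma pow_odd (hσ : σ ∈ Bset n) : ∀ (m : ℕ) (x : ℤ), (σ ^ m) (-x) = -(σ ^ m) x := by
  intro m
  induction m with
  | zero => intro x; simp
  | succ k ih =>
    intro x
    rw [pow_succ, Equiv.Perm.mul_apply, Equiv.Perm.mul_apply, hσ.1, ih]

lemma zpow_odd (hσ : σ ∈ Bset n) : ∀ (k : ℤ) (x : ℤ), (σ ^ k) (-x) = -(σ ^ k) x := by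
  intro k x
  cases k with
  | ofNat m => rw [Int.ofNat_eq_coe, zpow_natCast]; exact pow_odd hσ m x
  | negSucc m =>
    rw [zpow_negSucc]
    exact odd_inv (pow_odd hσ (m+1)) x

lemma sameCycle_neg (hσ : σ ∈ Bset n) {x y : ℤ} (h : σ.SameCycle x y) :
    σ.SameCycle (-x) (-y) := by
  obtain ⟨k, hk⟩ := h
  exact ⟨k, by rw [zpow_odd hσ, hk]⟩

lemma eq_of_fixed_sameCycle {a b : ℤ} (hfix : σ a = a) (h : σ.SameCycle a b) : b = a := by
  obtain ⟨k, hk⟩ := h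
  rw [Equiv.Perm.zpow_apply_eq_self_of_apply_eq_self hfix k] at hk
  omega

lemma moved_abs (hσ : σ ∈ Bset n) {x : ℤ} (h : σ x ≠ x) : |x| ≤ (n : ℤ) ∧ x ≠ 0 := by
  constructor
  · by_contra hc
    push_neg at hc
    exact h (hσ.2 x hc)
  · rintro rfl; exact h (Bzero hσ)

/-- orbit of a point -/
def orb (σ : Equiv.Perm ℤ) (i : ℤ) : Set ℤ := {j | σ.SameCycle i j}

lemma mem_orb {i j : ℤ} : j ∈ orb σ i ↔ σ.SameCycle i j := Iff.rfl

lemma self_mem_orb (i : ℤ) : i ∈ orb σ i := Equiv.Perm.SameCycle.refl σ i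

lemma orb_eq_of_sameCycle {i j : ℤ} (h : σ.SameCycle i j) : orb σ i = orb σ j := by
  ext x
  exact ⟨fun hx => h.symm.trans hx, fun hx => h.trans hx⟩

lemma orb_mem_nt {i : ℤ} (h : σ i ≠ i) : orb σ i ∈ ntOrbits σ := ⟨i, h, rfl⟩

lemma moved_of_mem_nt {O : Set ℤ} (hO : O ∈ ntOrbits σ) {x : ℤ} (hx : x ∈ O) :
    σ x ≠ x := by
  obtain ⟨i, hi, rfl⟩ := hO
  intro hfix
  have hix : i = x := eq_of_fixed_sameCycle hfix hx.symm
  subst hix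
  exact hi hfix

lemma orb_eq_of_mem_nt {O : Set ℤ} (hO : O ∈ ntOrbits σ) {x : ℤ} (hx : x ∈ O) :
    O = orb σ x := by
  obtain ⟨i, hi, rfl⟩ := hO
  exact orb_eq_of_sameCycle hx

lemma mem_negSet {B : Set ℤ} {x : ℤ} : x ∈ negSet B ↔ -x ∈ B := by
  constructor
  · rintro ⟨b, hb, rfl⟩; simpa using hb
  · intro h; exact ⟨-x, h, by ring⟩

lemma negSet_negSet (B : Set ℤ) : negSet (negSet B) = B := by
  ext x; simp [mem_negSet]

lemma ncard_negSet (B : Set ℤ) : (negSet B).ncard = B.ncard :=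
  B.ncard_image_of_injective neg_injective

lemma negSet_orb (hσ : σ ∈ Bset n) (i : ℤ) : negSet (orb σ i) = orb σ (-i) := by
  ext x
  rw [mem_negSet, mem_orb, mem_orb]
  constructor
  · intro h
    have := sameCycle_neg hσ h; simpa using this
  · intro h
    have := sameCycle_neg hσ h; simpa using this

lemma negSet_mem_nt (hσ : σ ∈ Bset n) {O : Set ℤ} (hO : O ∈ ntOrbits σ) :
    negSet O ∈ ntOrbits σ := by
  obtain ⟨i, hi, rfl⟩ := hO
  show negSet (orb σ i) ∈ ntOrbits σ
  rw [negSet_orb hσ]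
  apply orb_mem_nt
  intro h
  apply hi
  have := hσ.1 (-i)
  rw [h] at this
  simpa using this

lemma nt_subset_moved {O : Set ℤ} (hO : O ∈ ntOrbits σ) : O ⊆ {x | σ x ≠ x} :=
  fun x hx => moved_of_mem_nt hO hx

lemma moved_finite (hσ : σ ∈ Bset n) : {x : ℤ | σ x ≠ x}.Finite := by
  apply Set.Finite.subset (Set.finite_Icc (-(n:ℤ)) n)
  intro x hx
  have := (moved_abs hσ hx).1
  rw [abs_le] at this
  simp only [Set.mem_Icc]
  omega

lemma nt_finite (hσ : σ ∈ Bset n) {O : Set ℤ} (hO : O ∈ ntOrbits σ) : O.Finite :=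
  (moved_finite hσ).subset (nt_subset_moved hO)

lemma ntOrbits_finite (hσ : σ ∈ Bset n) : (ntOrbits σ).Finite := by
  apply Set.Finite.subset (moved_finite hσ).finite_subsets
  intro O hO
  exact nt_subset_moved hO

lemma nt_eq_or_disjoint {O O' : Set ℤ} (hO : O ∈ ntOrbits σ) (hO' : O' ∈ ntOrbits σ)
    {x : ℤ} (hx : x ∈ O) (hx' : x ∈ O') : O = O' := by
  rw [orb_eq_of_mem_nt hO hx, orb_eq_of_mem_nt hO' hx']

lemma nt_two_le_ncard (hσ : σ ∈ Bset n) {O : Set ℤ} (hO : O ∈ ntOrbits σ) :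
    2 ≤ O.ncard := by
  obtain ⟨i, hi, rfl⟩ := hO
  have h1 : i ∈ orb σ i := self_mem_orb i
  have h2 : σ i ∈ orb σ i := ⟨1, by simp⟩
  have : ({i, σ i} : Set ℤ) ⊆ orb σ i := by
    intro x hx; rcases hx with rfl | rfl
    · exact h1
    · exact h2
  calc 2 = ({i, σ i} : Set ℤ).ncard := by
        rw [Set.ncard_pair (Ne.symm hi)]
    _ ≤ (orb σ i).ncard := Set.ncard_le_ncard this (nt_finite hσ (orb_mem_nt hi))

open Module

/-- odd finitely-supported vectors supported in [-n,n] -/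
def Wn (n : ℕ) : Submodule ℚ (ℤ →₀ ℚ) where
  carrier := {v | (∀ x : ℤ, v (-x) = - v x) ∧ ∀ x : ℤ, (n : ℤ) < |x| → v x = 0}
  add_mem' := by
    intro a b ha hb
    exact ⟨fun x => by simp only [Finsupp.add_apply, ha.1 x, hb.1 x]; ring,
      fun x hx => by simp [ha.2 x hx, hb.2 x hx]⟩
  zero_mem' := ⟨fun x => by simp, fun x _ => rfl⟩
  smul_mem' := by
    intro c a ha
    exact ⟨fun x => by simp [ha.1 x], fun x hx => by simp [ha.2 x hx]⟩

lemma Wn_odd {v : ℤ →₀ ℚ} (hv : v ∈ Wn n) (x : ℤ) : v (-x) = - v x := hv.1 x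

lemma Wn_supp {v : ℤ →₀ ℚ} (hv : v ∈ Wn n) {x : ℤ} (hx : (n:ℤ) < |x|) : v x = 0 := hv.2 x hx

def bElt (i : ℤ) : ℤ →₀ ℚ := Finsupp.single i 1 - Finsupp.single (-i) 1

lemma bElt_apply {i : ℤ} (hi : i ≠ 0) (y : ℤ) :
    bElt i y = if y = i then 1 else if y = -i then -1 else 0 := by
  simp only [bElt, Finsupp.sub_apply, Finsupp.single_apply]
  split_ifs <;> try norm_num
  all_goals omega

lemma bElt_mem {i : ℤ} (h1 : i ≠ 0) (h2 : |i| ≤ (n:ℤ)) : bElt i ∈ Wn n := by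
  have h2' := abs_le.mp h2
  constructor
  · intro x
    rw [bElt_apply h1, bElt_apply h1]
    split_ifs <;> try norm_num
    all_goals omega
  · intro x hx
    have hx' := lt_abs.mp hx
    rw [bElt_apply h1]
    rcases hx' with h | h <;> split_ifs <;> try norm_num
    all_goals omega

lemma Wn_fd (n : ℕ) : FiniteDimensional ℚ (Wn n) := by
  have hle : Wn n ≤ Submodule.span ℚ (bElt '' (Set.Icc 1 (n:ℤ))) := by
    intro v hv
    have hrep : v = ∑ x ∈ Finset.Icc (1:ℤ) n, v x • bElt x := by
      ext y
      rw [Finsupp.finset_sum_apply]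
      have hterm : ∀ x ∈ Finset.Icc (1:ℤ) n, (v x • bElt x) y
          = v x * ((if y = x then (1:ℚ) else if y = -x then -1 else 0)) := by
        intro x hx
        simp only [Finset.mem_Icc] at hx
        rw [Finsupp.smul_apply, bElt_apply (by omega), smul_eq_mul]
      rw [Finset.sum_congr rfl hterm]
      by_cases hy0 : y = 0
      · subst hy0
        have h0 : v 0 = 0 := by have := Wn_odd hv 0; simp at this; linarith
        rw [h0, Finset.sum_eq_zero]
        intro x hx
        simp only [Finset.mem_Icc] at hx
        rw [if_neg (by omega), if_neg (by omega), mul_zero]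
      by_cases hy : 1 ≤ y ∧ y ≤ (n:ℤ)
      · rw [Finset.sum_eq_single y]
        · rw [if_pos rfl, mul_one]
        · intro x hx hxy
          simp only [Finset.mem_Icc] at hx
          rw [if_neg (fun h => hxy h.symm), if_neg (by omega), mul_zero]
        · intro hy'
          exact absurd (Finset.mem_Icc.mpr hy) hy'
      by_cases hy2 : 1 ≤ -y ∧ -y ≤ (n:ℤ)
      · rw [Finset.sum_eq_single (-y)]
        · rw [if_neg (by omega), if_pos (by omega), mul_neg_one]
          have := Wn_odd hv (-y); simp at this; linarith
        · intro x hx hxy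
          simp only [Finset.mem_Icc] at hx
          rw [if_neg (by omega), if_neg (by omega), mul_zero]
        · intro hy'
          exact absurd (Finset.mem_Icc.mpr hy2) hy'
      · rw [Wn_supp hv (by rcases abs_cases y with h | h <;> rw [h.1] <;> omega), Finset.sum_eq_zero]
        intro x hx
        simp only [Finset.mem_Icc] at hx
        rw [if_neg (by omega), if_neg (by omega), mul_zero]
    rw [hrep]
    apply Submodule.sum_mem
    intro x hx
    apply Submodule.smul_mem
    apply Submodule.subset_span
    exact ⟨x, by simpa using hx, rfl⟩
  have hfd : FiniteDimensional ℚ (Submodule.span ℚ (bElt '' (Set.Icc 1 (n:ℤ)))) :=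
    FiniteDimensional.span_of_finite ℚ ((Set.finite_Icc _ _).image _)
  exact Submodule.finiteDimensional_of_le hle

attribute [local instance] Wn_fd

/-- fixed subspace of σ inside Wn -/
def Kn (n : ℕ) (σ : Equiv.Perm ℤ) : Submodule ℚ ↥(Wn n) where
  carrier := {v | ∀ x : ℤ, (v : ℤ →₀ ℚ) (σ x) = (v : ℤ →₀ ℚ) x}
  add_mem' := by intro a b ha hb x; simp [ha x, hb x]
  zero_mem' := by intro x; simp
  smul_mem' := by intro c a ha x; simp [ha x]

lemma mem_Kn {v : ↥(Wn n)} : v ∈ Kn n σ ↔ ∀ x : ℤ, (v : ℤ →₀ ℚ) (σ x) = (v : ℤ →₀ ℚ) x :=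
  Iff.rfl

lemma Kn_one : Kn n 1 = ⊤ := by
  ext v; simp [mem_Kn]

lemma Kn_inf_le : Kn n σ ⊓ Kn n τ ≤ Kn n (σ * τ) := by
  intro v hv x
  have h1 := hv.1 (τ x)
  have h2 := hv.2 x
  rw [Equiv.Perm.mul_apply, h1, h2]

lemma Kn_const {v : ℤ →₀ ℚ} (hv : ∀ x : ℤ, v (σ x) = v x) {a b : ℤ}
    (h : σ.SameCycle a b) : v a = v b := by
  have hnat : ∀ (m : ℕ) (x : ℤ), v ((σ ^ m) x) = v x := by
    intro m
    induction m with
    | zero => intro x; simp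
    | succ k ih =>
      intro x
      rw [pow_succ, Equiv.Perm.mul_apply, ih, hv]
  have hinv : ∀ (m : ℕ) (x : ℤ), v ((σ ^ m)⁻¹ x) = v x := by
    intro m x
    have := hnat m ((σ ^ m)⁻¹ x)
    rw [Equiv.Perm.inv_def, Equiv.apply_symm_apply] at this
    exact this.symm
  obtain ⟨k, hk⟩ := h
  rw [← hk]
  cases k with
  | ofNat m => rw [Int.ofNat_eq_coe, zpow_natCast]; exact (hnat m a).symm
  | negSucc m => rw [zpow_negSucc]; exact (hinv (m+1) a).symm

open Classical in
/-- canonical coordinates: fixed points of [1,n] plus the least positive element of each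
mirror pair of positive orbits -/
def Tset (n : ℕ) (σ : Equiv.Perm ℤ) : Finset ℤ :=
  (Finset.Icc (1:ℤ) n).filter (fun t => σ t = t ∨
    (σ t ≠ t ∧ ¬σ.SameCycle t (-t) ∧
      ∀ s : ℤ, 1 ≤ s → s < t → ¬σ.SameCycle t s ∧ ¬σ.SameCycle t (-s)))

lemma mem_Tset {t : ℤ} : t ∈ Tset n σ ↔ (1 ≤ t ∧ t ≤ (n:ℤ)) ∧ (σ t = t ∨
    (σ t ≠ t ∧ ¬σ.SameCycle t (-t) ∧
      ∀ s : ℤ, 1 ≤ s → s < t → ¬σ.SameCycle t s ∧ ¬σ.SameCycle t (-s))) := by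
  classical
  rw [Tset, Finset.mem_filter, Finset.mem_Icc]

lemma Tset_pos {t : ℤ} (ht : t ∈ Tset n σ) : 1 ≤ t ∧ t ≤ (n:ℤ) := (mem_Tset.mp ht).1

lemma Tset_not_neg {t : ℤ} (ht : t ∈ Tset n σ) : ¬σ.SameCycle t (-t) := by
  obtain ⟨⟨h1, _⟩, h⟩ := mem_Tset.mp ht
  rcases h with hfix | hrep
  · intro hc
    have := eq_of_fixed_sameCycle hfix hc
    omega
  · exact hrep.2.1

lemma Tset_distinct (hσ : σ ∈ Bset n) {t t' : ℤ} (ht : t ∈ Tset n σ) (ht' : t' ∈ Tset n σ)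
    (hne : t ≠ t') : ¬σ.SameCycle t t' ∧ ¬σ.SameCycle t (-t') := by
  obtain ⟨⟨h1, h2⟩, hd⟩ := mem_Tset.mp ht
  obtain ⟨⟨h1', h2'⟩, hd'⟩ := mem_Tset.mp ht'
  rcases hd with hfix | hrep
  · constructor
    · intro hc
      exact hne (eq_of_fixed_sameCycle hfix hc).symm
    · intro hc
      have := eq_of_fixed_sameCycle hfix hc
      omega
  rcases hd' with hfix' | hrep'
  · constructor
    · intro hc
      exact hne (eq_of_fixed_sameCycle hfix' hc.symm)
    · intro hc
      have hfn : σ (-t') = -t' := by rw [hσ.1 t', hfix']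
      have := eq_of_fixed_sameCycle hfn hc.symm
      omega
  · rcases lt_or_gt_of_ne hne with hlt | hgt
    · have := hrep'.2.2 t h1 hlt
      constructor
      · intro hc; exact this.1 hc.symm
      · intro hc
        apply this.2
        have := sameCycle_neg hσ hc
        simpa using this.symm
    · exact hrep.2.2 t' h1' hgt

lemma K_vanish (hσ : σ ∈ Bset n) (v : ↥(Wn n)) (hvK : v ∈ Kn n σ)
    (hT : ∀ t ∈ Tset n σ, (v : ℤ →₀ ℚ) t = 0) : v = 0 := by
  have hconst : ∀ {a b : ℤ}, σ.SameCycle a b → (v : ℤ →₀ ℚ) a = (v : ℤ →₀ ℚ) b :=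
    fun h => Kn_const hvK h
  have hpos : ∀ y : ℤ, 1 ≤ y → y ≤ (n:ℤ) → (v : ℤ →₀ ℚ) y = 0 := by
    intro y h1 h2
    by_cases hfix : σ y = y
    · exact hT y (mem_Tset.mpr ⟨⟨h1, h2⟩, Or.inl hfix⟩)
    by_cases hneg : σ.SameCycle y (-y)
    · have hc := hconst hneg
      have ho := Wn_odd v.2 y
      linarith
    classical
    set C := (Finset.Icc (1:ℤ) n).filter
      (fun s => σ.SameCycle y s ∨ σ.SameCycle y (-s)) with hC
    have hyC : y ∈ C := by
      rw [hC, Finset.mem_filter, Finset.mem_Icc]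
      exact ⟨⟨h1, h2⟩, Or.inl (Equiv.Perm.SameCycle.refl σ y)⟩
    have hCne : C.Nonempty := ⟨y, hyC⟩
    obtain ⟨t, htC, hmin⟩ := C.exists_min_image id hCne
    simp only [id] at hmin
    rw [hC, Finset.mem_filter, Finset.mem_Icc] at htC
    obtain ⟨⟨ht1, ht2⟩, htc⟩ := htC

    have htm : σ t ≠ t := by
      intro hf
      rcases htc with a | b
      · have := eq_of_fixed_sameCycle hf a.symm
        exact hfix (by rw [this]; exact hf)
      · have hfn : σ (-t) = -t := by rw [hσ.1 t, hf]
        have := eq_of_fixed_sameCycle hfn b.symm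
        omega
    have htneg : ¬σ.SameCycle t (-t) := by
      intro hc
      rcases htc with a | b
      · have h1' : σ.SameCycle y (-t) := a.trans hc
        have h2' : σ.SameCycle (-y) (-t) := sameCycle_neg hσ a
        exact hneg (h1'.trans h2'.symm)
      · have h1' : σ.SameCycle y t := b.trans hc.symm
        have h2' : σ.SameCycle (-y) (-t) := sameCycle_neg hσ h1'
        exact hneg (b.trans h2'.symm)
    have hminT : ∀ s : ℤ, 1 ≤ s → s < t → ¬σ.SameCycle t s ∧ ¬σ.SameCycle t (-s) := by
      intro s hs1 hs2
      have hsC : s ∉ C := fun hs => absurd (hmin s hs) (by omega)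
      have hsn : s ≤ (n:ℤ) := by omega
      constructor
      · intro hc
        apply hsC
        rw [hC, Finset.mem_filter, Finset.mem_Icc]
        refine ⟨⟨hs1, hsn⟩, ?_⟩
        rcases htc with a | b
        · exact Or.inl (a.trans hc)
        · exact Or.inr (b.trans (sameCycle_neg hσ hc))
      · intro hc
        apply hsC
        rw [hC, Finset.mem_filter, Finset.mem_Icc]
        refine ⟨⟨hs1, hsn⟩, ?_⟩
        rcases htc with a | b
        · exact Or.inr (a.trans hc)
        · refine Or.inl (b.trans ?_)
          have := sameCycle_neg hσ hc
          simpa using this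
    have htT : t ∈ Tset n σ := mem_Tset.mpr ⟨⟨ht1, ht2⟩, Or.inr ⟨htm, htneg, hminT⟩⟩
    have hvt := hT t htT
    rcases htc with a | b
    · rw [hconst a]; exact hvt
    · rw [hconst b, Wn_odd v.2 t, hvt, neg_zero]
  apply Subtype.ext
  ext y
  show (v : ℤ →₀ ℚ) y = 0
  by_cases hy1 : 1 ≤ y ∧ y ≤ (n:ℤ)
  · exact hpos y hy1.1 hy1.2
  by_cases hy2 : 1 ≤ -y ∧ -y ≤ (n:ℤ)
  · have h0 := hpos (-y) hy2.1 hy2.2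
    have ho := Wn_odd v.2 (-y)
    rw [neg_neg] at ho
    rw [ho, h0, neg_zero]
  by_cases hy0 : y = 0
  · subst hy0
    have ho := Wn_odd v.2 0
    rw [neg_zero] at ho
    linarith
  · refine Wn_supp v.2 ?_
    rcases abs_cases y with h | h <;> rw [h.1] <;> omega

lemma exists_uvec (hσ : σ ∈ Bset n) {t : ℤ} (ht : t ∈ Tset n σ) :
    ∃ u : ↥(Wn n), u ∈ Kn n σ ∧
      ∀ t' ∈ Tset n σ, (u : ℤ →₀ ℚ) t' = if t' = t then 1 else 0 := by
  classical
  obtain ⟨ht1, ht2⟩ := Tset_pos ht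
  have htneg := Tset_not_neg ht
  set f : ℤ → ℚ := fun x => if σ.SameCycle t x then 1 else if σ.SameCycle t (-x) then -1 else 0
    with hf
  have hexcl : ∀ x : ℤ, ¬(σ.SameCycle t x ∧ σ.SameCycle t (-x)) := by
    rintro x ⟨hA, hB⟩
    apply htneg
    refine hB.trans ?_
    exact (sameCycle_neg hσ hA).symm
  have hsupp : ∀ a : ℤ, f a ≠ 0 → a ∈ Finset.Icc (-(n:ℤ)) n := by
    intro a ha
    by_contra hc
    rw [Finset.mem_Icc] at hc
    have hfixa : σ a = a := hσ.2 a (by rcases abs_cases a with h | h <;> rw [h.1] <;> omega)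
    have hfixna : σ (-a) = -a := by rw [hσ.1 a, hfixa]
    apply ha
    rw [hf]
    simp only
    rw [if_neg, if_neg]
    · intro hsc
      have := eq_of_fixed_sameCycle hfixna hsc.symm
      omega
    · intro hsc
      have := eq_of_fixed_sameCycle hfixa hsc.symm
      omega
  set u0 : ℤ →₀ ℚ := Finsupp.onFinset _ f hsupp with hu0
  have hu0a : ∀ x, u0 x = f x := fun x => rfl
  have hu0W : u0 ∈ Wn n := by
    constructor
    · intro x
      rw [hu0a, hu0a, hf]
      simp only
      by_cases hA : σ.SameCycle t x <;> by_cases hB : σ.SameCycle t (-x)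
      · exact absurd ⟨hA, hB⟩ (hexcl x)
      · rw [if_neg hB, if_pos (show σ.SameCycle t (- -x) by simpa using hA), if_pos hA]
        try norm_num
      · rw [if_pos hB, if_neg hA, if_pos hB]
        try norm_num
      · rw [if_neg hB, if_neg (by simpa using hA), if_neg hA, if_neg hB, neg_zero]
    · intro x hx
      have : f x ≠ 0 → x ∈ Finset.Icc (-(n:ℤ)) n := hsupp x
      rw [hu0a]
      by_contra hc
      have := this hc
      rw [Finset.mem_Icc] at this
      rcases abs_cases x with h | h <;> omega
  refine ⟨⟨u0, hu0W⟩, ?_, ?_⟩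
  · intro x
    show u0 (σ x) = u0 x
    rw [hu0a, hu0a, hf]
    simp only
    have e1 : σ.SameCycle t (σ x) ↔ σ.SameCycle t x := Equiv.Perm.sameCycle_apply_right
    have e2 : σ.SameCycle t (-(σ x)) ↔ σ.SameCycle t (-x) := by
      rw [show -(σ x) = σ (-x) from (hσ.1 x).symm]
      exact Equiv.Perm.sameCycle_apply_right
    rw [if_congr e1 rfl rfl, if_congr e2 rfl rfl]
  · intro t' ht'
    show u0 t' = _
    rw [hu0a, hf]
    simp only
    by_cases he : t' = t
    · subst he
      rw [if_pos rfl, if_pos (Equiv.Perm.SameCycle.refl σ t')]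
    · have hd := Tset_distinct hσ ht ht' (fun h => he h.symm)
      rw [if_neg he, if_neg, if_neg]
      · intro hc; exact hd.2 hc
      · intro hc; exact hd.1 hc

def resMap (n : ℕ) (σ : Equiv.Perm ℤ) : ↥(Kn n σ) →ₗ[ℚ] (↥(Tset n σ) → ℚ) where
  toFun v := fun t => ((v : ↥(Wn n)) : ℤ →₀ ℚ) (t : ℤ)
  map_add' a b := by funext t; simp
  map_smul' c a := by funext t; simp

lemma finrank_Kn (hσ : σ ∈ Bset n) :
    finrank ℚ ↥(Kn n σ) = (Tset n σ).card := by
  classical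
  have hbij : Function.Bijective (resMap n σ) := by
    constructor
    · intro a b hab
      set d : ↥(Wn n) := ⟨((a : ↥(Wn n)) : ℤ →₀ ℚ) - ((b : ↥(Wn n)) : ℤ →₀ ℚ),
        Submodule.sub_mem _ (a : ↥(Wn n)).2 (b : ↥(Wn n)).2⟩ with hd
      have hdK : d ∈ Kn n σ := by
        intro x
        show (((a : ↥(Wn n)) : ℤ →₀ ℚ) - ((b : ↥(Wn n)) : ℤ →₀ ℚ)) (σ x) = _
        rw [Finsupp.sub_apply, Finsupp.sub_apply, a.2 x, b.2 x]
      have hT : ∀ t ∈ Tset n σ, (d : ℤ →₀ ℚ) t = 0 := by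
        intro t ht
        have h := congrFun hab ⟨t, ht⟩
        show (((a : ↥(Wn n)) : ℤ →₀ ℚ) - ((b : ↥(Wn n)) : ℤ →₀ ℚ)) t = 0
        rw [Finsupp.sub_apply]
        rw [show ((a : ↥(Wn n)) : ℤ →₀ ℚ) t = ((b : ↥(Wn n)) : ℤ →₀ ℚ) t from h]
        ring
      have h0 := K_vanish hσ d hdK hT
      rw [hd] at h0
      have h1 : ((a : ↥(Wn n)) : ℤ →₀ ℚ) = ((b : ↥(Wn n)) : ℤ →₀ ℚ) := by
        have := congrArg Subtype.val h0
        simpa [sub_eq_zero] using this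
      exact Subtype.ext (Subtype.ext h1)
    · intro c
      have huc : ∀ t : ↥(Tset n σ), ∃ u : ↥(Wn n), u ∈ Kn n σ ∧
          ∀ t' ∈ Tset n σ, (u : ℤ →₀ ℚ) t' = if t' = (t:ℤ) then 1 else 0 :=
        fun t => exists_uvec hσ t.2
      choose u huK huv using huc
      set w0 : ↥(Wn n) := ∑ t ∈ (Tset n σ).attach, c t • u t with hw0
      have hw0K : w0 ∈ Kn n σ :=
        Submodule.sum_mem _ (fun t _ => Submodule.smul_mem _ _ (huK t))
      refine ⟨⟨w0, hw0K⟩, ?_⟩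
      funext t'
      show (w0 : ℤ →₀ ℚ) (t' : ℤ) = c t'
      rw [hw0]
      rw [show ((↑(∑ t ∈ (Tset n σ).attach, c t • u t) : ℤ →₀ ℚ))
          = ∑ t ∈ (Tset n σ).attach, c t • ((u t : ℤ →₀ ℚ)) by
        push_cast [Submodule.coe_sum]; rfl]
      rw [Finsupp.finset_sum_apply]
      rw [Finset.sum_eq_single t']
      · rw [Finsupp.smul_apply, huv t' t'.1 t'.2, if_pos rfl, smul_eq_mul, mul_one]
      · intro b _ hb
        rw [Finsupp.smul_apply, huv b t'.1 t'.2, if_neg, smul_zero]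
        intro hc
        exact hb (Subtype.ext hc).symm
      · intro hc
        exact absurd (Finset.mem_attach _ t') hc
  have e : ↥(Kn n σ) ≃ₗ[ℚ] (↥(Tset n σ) → ℚ) := LinearEquiv.ofBijective (resMap n σ) hbij
  rw [e.finrank_eq, Module.finrank_pi, Fintype.card_coe]

lemma finrank_Wn : finrank ℚ ↥(Wn n) = n := by
  have h1 := finrank_Kn (one_mem_B (n := n))
  rw [Kn_one, finrank_top] at h1
  rw [h1]
  have h2 : Tset n 1 = Finset.Icc (1:ℤ) n := by
    ext x
    rw [mem_Tset, Finset.mem_Icc]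
    simp
  rw [h2, Int.card_Icc]
  simp

lemma long_apply {i j : ℤ} (hi : i ≠ 0) (hj : j ≠ 0) (hij : |i| ≠ |j|) :
    let r := Equiv.swap i j * Equiv.swap (-i) (-j)
    r i = j ∧ r j = i ∧ r (-i) = -j ∧ r (-j) = -i ∧
      ∀ x, x ≠ i → x ≠ j → x ≠ -i → x ≠ -j → r x = x := by
  intro r
  have d1 : i ≠ j := fun h => hij (by rw [h])
  have d2 : i ≠ -j := fun h => hij (by rw [h, abs_neg])
  have s1 : Equiv.swap (-i) (-j) i = i :=
    Equiv.swap_apply_of_ne_of_ne (by omega) (by omega)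
  have s2 : Equiv.swap (-i) (-j) j = j :=
    Equiv.swap_apply_of_ne_of_ne (by omega) (by omega)
  have s3 : Equiv.swap i j (-j) = -j :=
    Equiv.swap_apply_of_ne_of_ne (by omega) (by omega)
  have s4 : Equiv.swap i j (-i) = -i :=
    Equiv.swap_apply_of_ne_of_ne (by omega) (by omega)
  refine ⟨?_, ?_, ?_, ?_, ?_⟩
  · show Equiv.swap i j (Equiv.swap (-i) (-j) i) = j
    rw [s1, Equiv.swap_apply_left]
  · show Equiv.swap i j (Equiv.swap (-i) (-j) j) = i
    rw [s2, Equiv.swap_apply_right]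
  · show Equiv.swap i j (Equiv.swap (-i) (-j) (-i)) = -j
    rw [Equiv.swap_apply_left, s3]
  · show Equiv.swap i j (Equiv.swap (-i) (-j) (-j)) = -i
    rw [Equiv.swap_apply_right, s4]
  · intro x hx1 hx2 hx3 hx4
    show Equiv.swap i j (Equiv.swap (-i) (-j) x) = x
    have s5 : Equiv.swap (-i) (-j) x = x :=
      Equiv.swap_apply_of_ne_of_ne (by omega) (by omega)
    rw [s5, Equiv.swap_apply_of_ne_of_ne hx1 hx2]

lemma refl_mem_B {r : Equiv.Perm ℤ} (hr : IsRefl n r) : r ∈ Bset n := by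
  rcases hr with ⟨i, j, hi, hj, hin, hjn, hij, rfl⟩ | ⟨i, hi, hin, rfl⟩
  · obtain ⟨e1, e2, e3, e4, e5⟩ := long_apply hi hj hij
    constructor
    · intro x
      by_cases h1 : x = i
      · subst h1; rw [e3, e1]
      by_cases h2 : x = j
      · subst h2; rw [e4, e2]
      by_cases h3 : x = -i
      · subst h3; rw [neg_neg, e1, e3, neg_neg]
      by_cases h4 : x = -j
      · subst h4; rw [neg_neg, e2, e4, neg_neg]
      · rw [e5 x h1 h2 h3 h4, e5 (-x) (by omega) (by omega) (by omega) (by omega)]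
    · intro x hx
      have hi' := abs_le.mp hin
      have hj' := abs_le.mp hjn
      rcases abs_cases x with h | h <;>
        exact e5 x (by omega) (by omega) (by omega) (by omega)
  · constructor
    · intro x
      by_cases h1 : x = i
      · subst h1
        rw [Equiv.swap_apply_right, Equiv.swap_apply_left]
        omega
      by_cases h2 : x = -i
      · subst h2
        rw [neg_neg, Equiv.swap_apply_left, Equiv.swap_apply_right]
      · rw [Equiv.swap_apply_of_ne_of_ne h1 h2,
          Equiv.swap_apply_of_ne_of_ne (by omega) (by omega)]
    · intro x hx
      rcases abs_cases x with h | h <;>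
        exact Equiv.swap_apply_of_ne_of_ne (by omega) (by omega)

lemma refl_sq {r : Equiv.Perm ℤ} (hr : IsRefl n r) : r * r = 1 := by
  rcases hr with ⟨i, j, hi, hj, hin, hjn, hij, rfl⟩ | ⟨i, hi, hin, rfl⟩
  · obtain ⟨e1, e2, e3, e4, e5⟩ := long_apply hi hj hij
    ext x
    show (Equiv.swap i j * Equiv.swap (-i) (-j)) ((Equiv.swap i j * Equiv.swap (-i) (-j)) x) = x
    by_cases h1 : x = i
    · subst h1; rw [e1, e2]
    by_cases h2 : x = j
    · subst h2; rw [e2, e1]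
    by_cases h3 : x = -i
    · subst h3; rw [e3, e4]
    by_cases h4 : x = -j
    · subst h4; rw [e4, e3]
    · rw [e5 x h1 h2 h3 h4, e5 x h1 h2 h3 h4]
  · rw [Equiv.swap_mul_self]

lemma refl_K_bound {r : Equiv.Perm ℤ} (hr : IsRefl n r) :
    n ≤ finrank ℚ ↥(Kn n r) + 1 := by
  rcases hr with ⟨i, j, hi, hj, hin, hjn, hij, rfl⟩ | ⟨i, hi, hin, rfl⟩
  · obtain ⟨e1, e2, e3, e4, e5⟩ := long_apply hi hj hij
    set φ : ↥(Wn n) →ₗ[ℚ] ℚ :=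
      (Finsupp.lapply i).comp ((Wn n).subtype) - (Finsupp.lapply j).comp ((Wn n).subtype)
      with hφ
    have hker : LinearMap.ker φ ≤ Kn n (Equiv.swap i j * Equiv.swap (-i) (-j)) := by
      intro v hv
      have hv' : (v : ℤ →₀ ℚ) i = (v : ℤ →₀ ℚ) j := by
        have : φ v = 0 := hv
        rw [hφ] at this
        simp only [LinearMap.sub_apply, LinearMap.comp_apply, Finsupp.lapply_apply,
          Submodule.coe_subtype] at this
        linarith
      intro x
      by_cases h1 : x = i
      · subst h1; rw [e1, hv']
      by_cases h2 : x = j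
      · subst h2; rw [e2, hv']
      by_cases h3 : x = -i
      · subst h3; rw [e3, Wn_odd v.2 j, Wn_odd v.2 i, hv']
      by_cases h4 : x = -j
      · subst h4; rw [e4, Wn_odd v.2 i, Wn_odd v.2 j, hv']
      · rw [e5 x h1 h2 h3 h4]
    have hrk := LinearMap.finrank_range_add_finrank_ker φ
    rw [finrank_Wn] at hrk
    have hr1 : finrank ℚ ↥(LinearMap.range φ) ≤ 1 := by
      have := Submodule.finrank_le (LinearMap.range φ)
      rwa [Module.finrank_self] at this
    have hmono := Submodule.finrank_mono hker
    omega
  · set φ : ↥(Wn n) →ₗ[ℚ] ℚ := (Finsupp.lapply i).comp ((Wn n).subtype) with hφ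
    have hker : LinearMap.ker φ ≤ Kn n (Equiv.swap i (-i)) := by
      intro v hv
      have hv' : (v : ℤ →₀ ℚ) i = 0 := hv
      have hv'' : (v : ℤ →₀ ℚ) (-i) = 0 := by rw [Wn_odd v.2 i, hv', neg_zero]
      intro x
      by_cases h1 : x = i
      · subst h1; rw [Equiv.swap_apply_left, hv', hv'']
      by_cases h2 : x = -i
      · subst h2; rw [Equiv.swap_apply_right, hv', hv'']
      · rw [Equiv.swap_apply_of_ne_of_ne h1 h2]
    have hrk := LinearMap.finrank_range_add_finrank_ker φ
    rw [finrank_Wn] at hrk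
    have hr1 : finrank ℚ ↥(LinearMap.range φ) ≤ 1 := by
      have := Submodule.finrank_le (LinearMap.range φ)
      rwa [Module.finrank_self] at this
    have hmono := Submodule.finrank_mono hker
    omega

lemma prod_refl_bound : ∀ L : List (Equiv.Perm ℤ), (∀ r ∈ L, IsRefl n r) →
    n ≤ finrank ℚ ↥(Kn n L.prod) + L.length := by
  intro L
  induction L with
  | nil =>
    intro _
    rw [List.prod_nil, Kn_one, finrank_top, finrank_Wn]
    simp
  | cons r L ih =>
    intro hL
    have hr : IsRefl n r := hL r (List.mem_cons_self (a := r) (l := L))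
    have hL' : ∀ s ∈ L, IsRefl n s := fun s hs => hL s (List.mem_cons_of_mem r hs)
    have h0 := ih hL'
    have h1 := refl_K_bound hr
    have h2 := Submodule.finrank_sup_add_finrank_inf_eq (Kn n r) (Kn n L.prod)
    have h3 : finrank ℚ ↥(Kn n r ⊔ Kn n L.prod) ≤ n := by
      have := Submodule.finrank_le (Kn n r ⊔ Kn n L.prod)
      rwa [finrank_Wn] at this
    have h4 : finrank ℚ ↥(Kn n r ⊓ Kn n L.prod) ≤ finrank ℚ ↥(Kn n (r * L.prod)) :=
      Submodule.finrank_mono Kn_inf_le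
    rw [List.prod_cons, List.length_cons]
    omega

lemma K_lt_of_ne_one (hσ : σ ∈ Bset n) (hne : σ ≠ 1) : finrank ℚ ↥(Kn n σ) < n := by
  obtain ⟨x, hx⟩ : ∃ x, σ x ≠ x := by
    by_contra h
    push_neg at h
    exact hne (Equiv.ext h)
  obtain ⟨hxa, hx0⟩ := moved_abs hσ hx
  obtain ⟨i, hi1, hi2, him⟩ : ∃ i : ℤ, 1 ≤ i ∧ i ≤ (n:ℤ) ∧ σ i ≠ i := by
    have hxa' := abs_le.mp hxa
    by_cases hpos : 1 ≤ x
    · exact ⟨x, hpos, hxa'.2, hx⟩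
    · refine ⟨-x, by omega, by omega, fun hc => hx ?_⟩
      rw [hσ.1 x] at hc
      omega
  have hbm : bElt i ∈ Wn n := bElt_mem (by omega) (abs_le.mpr ⟨by omega, hi2⟩)
  have hnot : (⟨bElt i, hbm⟩ : ↥(Wn n)) ∉ Kn n σ := by
    intro hK
    have := hK i
    rw [bElt_apply (show i ≠ 0 by omega) (σ i), bElt_apply (show i ≠ 0 by omega) i,
      if_pos rfl, if_neg him] at this
    split_ifs at this <;> norm_num at this
  have hlt : Kn n σ < ⊤ := lt_top_iff_ne_top.mpr (fun h => hnot (h ▸ Submodule.mem_top))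
  have := Submodule.finrank_lt_finrank_of_lt hlt
  rwa [finrank_top, finrank_Wn] at this

lemma step_lemma (hσ : σ ∈ Bset n) {i : ℤ} (h1 : 1 ≤ i) (h2 : i ≤ (n:ℤ)) (hm : σ i ≠ i) :
    ∃ r, IsRefl n r ∧ r * (r * σ) = σ ∧
      finrank ℚ ↥(Kn n σ) < finrank ℚ ↥(Kn n (r * σ)) := by
  have hi0 : i ≠ 0 := by omega
  have hj0 : σ i ≠ 0 := by
    intro hc
    have : σ i = σ 0 := by rw [hc, Bzero hσ]
    have := σ.injective this
    omega
  have hjn : |σ i| ≤ (n:ℤ) := by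
    by_contra hc
    push_neg at hc
    have hfix : σ (σ i) = σ i := hσ.2 (σ i) hc
    have := σ.injective hfix
    exact hm this
  -- case split
  by_cases hcase : σ i = -i
  · -- short reflection
    set r := Equiv.swap i (-i) with hrdef
    have hrefl : IsRefl n r := Or.inr ⟨i, by omega, h2, rfl⟩
    have hsq : r * r = 1 := Equiv.swap_mul_self i (-i)
    have hback : r * (r * σ) = σ := by rw [← mul_assoc, hsq, one_mul]
    set τ := r * σ with hτdef
    have hτi : τ i = i := by
      show r (σ i) = i
      rw [hcase, hrdef, Equiv.swap_apply_right]
    have hτni : τ (-i) = -i := by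
      show r (σ (-i)) = -i
      rw [hσ.1 i, hcase, neg_neg, hrdef, Equiv.swap_apply_left]
    have hτx : ∀ x, x ≠ i → x ≠ -i → τ x = σ x := by
      intro x hx1 hx2
      show r (σ x) = σ x
      have hne1 : σ x ≠ i := by
        intro hc
        have : σ (-i) = i := by rw [hσ.1 i, hcase, neg_neg]
        exact hx2 (σ.injective (hc.trans this.symm))
      have hne2 : σ x ≠ -i := by
        intro hc
        exact hx1 (σ.injective (hc.trans hcase.symm))
      rw [hrdef, Equiv.swap_apply_of_ne_of_ne hne1 hne2]
    -- shared ending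
    have hle : Kn n σ ≤ Kn n τ := by
      intro v hv x
      by_cases hx1 : x = i
      · subst hx1; rw [hτi]
      by_cases hx2 : x = -i
      · subst hx2; rw [hτni]
      · rw [hτx x hx1 hx2, hv x]
    have hbm : bElt i ∈ Wn n := bElt_mem hi0 (abs_le.mpr ⟨by omega, h2⟩)
    have hbK : (⟨bElt i, hbm⟩ : ↥(Wn n)) ∈ Kn n τ := by
      intro x
      show bElt i (τ x) = bElt i x
      by_cases hx1 : x = i
      · subst hx1; rw [hτi]
      by_cases hx2 : x = -i
      · subst hx2; rw [hτni]
      · have hne1 : τ x ≠ i := fun hc => hx1 (τ.injective (hc.trans hτi.symm))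
        have hne2 : τ x ≠ -i := fun hc => hx2 (τ.injective (hc.trans hτni.symm))
        rw [bElt_apply hi0, bElt_apply hi0, if_neg hne1, if_neg hne2, if_neg hx1, if_neg hx2]
    have hbKσ : (⟨bElt i, hbm⟩ : ↥(Wn n)) ∉ Kn n σ := by
      intro hK
      have := hK i
      rw [bElt_apply hi0 (σ i), bElt_apply hi0 i, if_pos rfl, if_neg hm] at this
      split_ifs at this <;> norm_num at this
    have hne : Kn n σ ≠ Kn n τ := fun he => hbKσ (he ▸ hbK)
    exact ⟨r, hrefl, hback, Submodule.finrank_lt_finrank_of_lt (lt_of_le_of_ne hle hne)⟩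
  · -- long reflection
    set j := σ i with hjdef
    have hij : |i| ≠ |j| := by
      intro hc
      rcases abs_eq_abs.mp hc with h | h
      · exact hm h.symm
      · exact hcase (by omega)
    have hji : j ≠ i := fun hc => hm hc
    set r := Equiv.swap i j * Equiv.swap (-i) (-j) with hrdef
    obtain ⟨e1, e2, e3, e4, e5⟩ := long_apply hi0 hj0 hij
    have hrefl : IsRefl n r :=
      Or.inl ⟨i, j, hi0, hj0, abs_le.mpr ⟨by omega, h2⟩, hjn, hij, rfl⟩
    have hsq : r * r = 1 := refl_sq hrefl
    have hback : r * (r * σ) = σ := by rw [← mul_assoc, hsq, one_mul]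
    set τ := r * σ with hτdef
    have hτi : τ i = i := by
      show r (σ i) = i
      rw [← hjdef, hrdef]; exact e2
    have hτni : τ (-i) = -i := by
      show r (σ (-i)) = -i
      rw [hσ.1 i, ← hjdef, hrdef]; exact e4
    -- key: Kσ ≤ Kτ
    have hle : Kn n σ ≤ Kn n τ := by
      intro v hv x
      by_cases hx1 : x = i
      · subst hx1; rw [hτi]
      by_cases hx2 : x = -i
      · subst hx2; rw [hτni]
      by_cases hy1 : σ x = i
      · have hτx : τ x = j := by show r (σ x) = j; rw [hy1, hrdef]; exact e1
        rw [hτx]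
        have hvj : (v : ℤ →₀ ℚ) j = (v : ℤ →₀ ℚ) i := by rw [hjdef]; exact hv i
        rw [hvj, ← hy1, hv x]
      by_cases hy2 : σ x = -i
      · have hτx : τ x = -j := by show r (σ x) = -j; rw [hy2, hrdef]; exact e3
        rw [hτx]
        have hvj : (v : ℤ →₀ ℚ) (-j) = (v : ℤ →₀ ℚ) (-i) := by
          have : σ (-i) = -j := by rw [hσ.1 i, hjdef]
          rw [← this]; exact hv (-i)
        rw [hvj, ← hy2, hv x]
      · have hy3 : σ x ≠ j := fun hc => hx1 (σ.injective (by rw [hc, hjdef]))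
        have hy4 : σ x ≠ -j := by
          intro hc
          apply hx2
          apply σ.injective
          rw [hc, hσ.1 i, hjdef]
        have hτx : τ x = σ x := by show r (σ x) = σ x; rw [hrdef]; exact e5 _ hy1 hy3 hy2 hy4
        rw [hτx, hv x]
    have hbm : bElt i ∈ Wn n := bElt_mem hi0 (abs_le.mpr ⟨by omega, h2⟩)
    have hbK : (⟨bElt i, hbm⟩ : ↥(Wn n)) ∈ Kn n τ := by
      intro x
      show bElt i (τ x) = bElt i x
      by_cases hx1 : x = i
      · subst hx1; rw [hτi]
      by_cases hx2 : x = -i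
      · subst hx2; rw [hτni]
      · have hne1 : τ x ≠ i := fun hc => hx1 (τ.injective (hc.trans hτi.symm))
        have hne2 : τ x ≠ -i := fun hc => hx2 (τ.injective (hc.trans hτni.symm))
        rw [bElt_apply hi0, bElt_apply hi0, if_neg hne1, if_neg hne2, if_neg hx1, if_neg hx2]
    have hbKσ : (⟨bElt i, hbm⟩ : ↥(Wn n)) ∉ Kn n σ := by
      intro hK
      have := hK i
      rw [bElt_apply hi0 (σ i), bElt_apply hi0 i, if_pos rfl, if_neg hm] at this
      split_ifs at this <;> norm_num at this
    have hne : Kn n σ ≠ Kn n τ := fun he => hbKσ (he ▸ hbK)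
    exact ⟨r, hrefl, hback, Submodule.finrank_lt_finrank_of_lt (lt_of_le_of_ne hle hne)⟩

lemma exists_fact : ∀ m : ℕ, ∀ σ, σ ∈ Bset n → n - finrank ℚ ↥(Kn n σ) ≤ m →
    ∃ k, ∃ r : Fin k → Equiv.Perm ℤ, (∀ t, IsRefl n (r t)) ∧ (List.ofFn r).prod = σ ∧
      k + finrank ℚ ↥(Kn n σ) ≤ n := by
  have hone : ∀ σ, σ = (1 : Equiv.Perm ℤ) →
      ∃ k, ∃ r : Fin k → Equiv.Perm ℤ, (∀ t, IsRefl n (r t)) ∧ (List.ofFn r).prod = σ ∧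
        k + finrank ℚ ↥(Kn n σ) ≤ n := by
    rintro σ rfl
    refine ⟨0, fun t => t.elim0, fun t => t.elim0, by simp, ?_⟩
    rw [Kn_one, finrank_top, finrank_Wn]
    omega
  intro m
  induction m with
  | zero =>
    intro σ hσ hb
    by_cases h1 : σ = 1
    · exact hone σ h1
    · have := K_lt_of_ne_one hσ h1
      omega
  | succ m ih =>
    intro σ hσ hb
    by_cases h1 : σ = 1
    · exact hone σ h1
    · obtain ⟨x, hx⟩ : ∃ x, σ x ≠ x := by
        by_contra h
        push_neg at h
        exact h1 (Equiv.ext h)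
      obtain ⟨hxa, hx0⟩ := moved_abs hσ hx
      have hxa' := abs_le.mp hxa
      obtain ⟨i, hi1, hi2, him⟩ : ∃ i : ℤ, 1 ≤ i ∧ i ≤ (n:ℤ) ∧ σ i ≠ i := by
        by_cases hpos : 1 ≤ x
        · exact ⟨x, hpos, hxa'.2, hx⟩
        · refine ⟨-x, by omega, by omega, fun hc => hx ?_⟩
          rw [hσ.1 x] at hc
          omega
      obtain ⟨r, hrefl, hback, hlt⟩ := step_lemma hσ hi1 hi2 him
      have hτB : r * σ ∈ Bset n := mul_mem_B (refl_mem_B hrefl) hσ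
      have hτb : n - finrank ℚ ↥(Kn n (r * σ)) ≤ m := by omega
      obtain ⟨k, r', hr1, hr2, hr3⟩ := ih (r * σ) hτB hτb
      refine ⟨k + 1, Fin.cons r r', ?_, ?_, by omega⟩
      · intro t
        refine Fin.cases ?_ ?_ t
        · rw [Fin.cons_zero]; exact hrefl
        · intro t'; rw [Fin.cons_succ]; exact hr1 t'
      · rw [List.ofFn_succ]
        simp only [Fin.cons_zero, Fin.cons_succ]
        rw [List.prod_cons, hr2, hback]

lemma even_sum_inv {α : Type*} [DecidableEq α] :
    ∀ (s : Finset α) (inv : α → α) (g : α → ℕ),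
    (∀ x ∈ s, inv x ∈ s) → (∀ x ∈ s, inv (inv x) = x) → (∀ x ∈ s, inv x ≠ x) →
    (∀ x ∈ s, g (inv x) = g x) → Even (∑ x ∈ s, g x) := by
  intro s
  induction s using Finset.strongInductionOn with
  | _ s ih =>
    intro inv g h1 h2 h3 h4
    rcases s.eq_empty_or_nonempty with rfl | ⟨x, hx⟩
    · simp
    · set s' := (s.erase x).erase (inv x) with hs'
      have hxinv : inv x ∈ s := h1 x hx
      have hxne : inv x ≠ x := h3 x hx
      have hinvm : inv x ∈ s.erase x := Finset.mem_erase.mpr ⟨hxne, hxinv⟩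
      have hsplit : s = insert x (insert (inv x) s') := by
        rw [hs', Finset.insert_erase hinvm, Finset.insert_erase hx]
      have hs'sub : s' ⊆ s := fun y hy =>
        Finset.mem_of_mem_erase (Finset.mem_of_mem_erase hy)
      have hs'ss : s' ⊂ s :=
        Finset.ssubset_of_subset_of_ssubset (Finset.erase_subset _ _)
          (Finset.erase_ssubset hx)
      have hxs' : x ∉ s' := by
        rw [hs']
        intro hc
        exact (Finset.mem_erase.mp (Finset.mem_of_mem_erase hc)).1 rfl
      have hinvs' : inv x ∉ s' := by
        rw [hs']
        intro hc
        exact (Finset.mem_erase.mp hc).1 rfl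
      have hinvinj : ∀ y ∈ s', inv y ∈ s' := by
        intro y hy
        have hys := hs'sub hy
        rw [hs', Finset.mem_erase, Finset.mem_erase]
        refine ⟨?_, ?_, h1 y hys⟩
        · intro hc
          have : inv (inv y) = inv (inv x) := by rw [hc]
          rw [h2 y hys, h2 x hx] at this
          rw [hs'] at hy
          exact (Finset.mem_erase.mp (Finset.mem_of_mem_erase hy)).1 this
        · intro hc
          have : inv (inv y) = inv x := by rw [hc]
          rw [h2 y hys] at this
          rw [hs'] at hy
          exact (Finset.mem_erase.mp hy).1 this
      have hind := ih s' hs'ss inv g hinvinj (fun y hy => h2 y (hs'sub hy))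
        (fun y hy => h3 y (hs'sub hy)) (fun y hy => h4 y (hs'sub hy))
      obtain ⟨c, hc⟩ := hind
      rw [hsplit, Finset.sum_insert (by
          intro hc'
          rcases Finset.mem_insert.mp hc' with h | h
          · exact hxne h.symm
          · exact hxs' h),
        Finset.sum_insert hinvs', h4 x hx, hc]
      exact ⟨g x + c, by ring⟩

open Classical in
/-- least positive element hitting O or -O -/
def leastPos (O : Set ℤ) : ℤ :=
  if h : ∃ m : ℤ, (0 < m ∧ (m ∈ O ∨ -m ∈ O)) ∧
      ∀ s : ℤ, (0 < s ∧ (s ∈ O ∨ -s ∈ O)) → m ≤ s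
  then h.choose else 0

lemma leastPos_spec {O : Set ℤ}
    (h : ∃ m : ℤ, (0 < m ∧ (m ∈ O ∨ -m ∈ O)) ∧
      ∀ s : ℤ, (0 < s ∧ (s ∈ O ∨ -s ∈ O)) → m ≤ s) :
    (0 < leastPos O ∧ (leastPos O ∈ O ∨ -leastPos O ∈ O)) ∧
      ∀ s : ℤ, (0 < s ∧ (s ∈ O ∨ -s ∈ O)) → leastPos O ≤ s := by
  rw [leastPos, dif_pos h]
  exact h.choose_spec

lemma leastPos_eq {O : Set ℤ} {m : ℤ}
    (hm : (0 < m ∧ (m ∈ O ∨ -m ∈ O)) ∧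
      ∀ s : ℤ, (0 < s ∧ (s ∈ O ∨ -s ∈ O)) → m ≤ s) : leastPos O = m := by
  have h : ∃ m : ℤ, (0 < m ∧ (m ∈ O ∨ -m ∈ O)) ∧
      ∀ s : ℤ, (0 < s ∧ (s ∈ O ∨ -s ∈ O)) → m ≤ s := ⟨m, hm⟩
  have hs := leastPos_spec h
  exact le_antisymm (hs.2 m hm.1) (hm.2 _ hs.1)

lemma leastPos_exists (hσ : σ ∈ Bset n) {O : Set ℤ} (hO : O ∈ ntOrbits σ) :
    ∃ m : ℤ, (0 < m ∧ (m ∈ O ∨ -m ∈ O)) ∧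
      ∀ s : ℤ, (0 < s ∧ (s ∈ O ∨ -s ∈ O)) → m ≤ s := by
  have hne : ∃ z : ℤ, 0 < z ∧ (z ∈ O ∨ -z ∈ O) := by
    obtain ⟨i, hi, rfl⟩ := hO
    have hi0 : i ≠ 0 := (moved_abs hσ hi).2
    by_cases hp : 0 < i
    · exact ⟨i, hp, Or.inl (self_mem_orb i)⟩
    · exact ⟨-i, by omega, Or.inr (by rw [neg_neg]; exact self_mem_orb i)⟩
  obtain ⟨lb, h1, h2⟩ := Int.exists_least_of_bdd
    (P := fun z => 0 < z ∧ (z ∈ O ∨ -z ∈ O)) ⟨0, fun z hz => by omega⟩ hne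
  exact ⟨lb, h1, h2⟩

lemma orb_pos_of_not_neg (hσ : σ ∈ Bset n) {t : ℤ} (hm : σ t ≠ t)
    (hneg : ¬σ.SameCycle t (-t)) : negSet (orb σ t) ≠ orb σ t := by
  intro hc
  apply hneg
  have : -t ∈ negSet (orb σ t) := mem_negSet.mpr (by rw [neg_neg]; exact self_mem_orb t)
  rw [hc] at this
  exact this

lemma count_lemma (hσ : σ ∈ Bset n) :
    (Tset n σ).card + (normPlus σ + sizeMinus σ) = n := by
  classical
  have hSfin : {x : ℤ | σ x ≠ x}.Finite := moved_finite hσ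
  have hntfin := ntOrbits_finite hσ
  have hposfin : (posOrbits σ).Finite := hntfin.subset (fun O hO => hO.1)
  have hnegfin : (negOrbits σ).Finite := hntfin.subset (fun O hO => hO.1)
  set SF := hSfin.toFinset with hSF
  set NT := hntfin.toFinset with hNT
  set PO := hposfin.toFinset with hPO
  set NO := hnegfin.toFinset with hNO
  set Pfin := (Finset.Icc (1:ℤ) n).filter (fun x => ¬σ x = x) with hPfin
  set Tfix := (Finset.Icc (1:ℤ) n).filter (fun t => σ t = t) with hTfix
  set Trep := (Finset.Icc (1:ℤ) n).filter (fun t => ¬σ t = t ∧ ¬σ.SameCycle t (-t) ∧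
    ∀ s : ℤ, 1 ≤ s → s < t → ¬σ.SameCycle t s ∧ ¬σ.SameCycle t (-s)) with hTrep
  -- (a) total size of orbits = |support|
  have ha : SF.card = ∑ O ∈ NT, O.ncard := by
    have hmap : ∀ x ∈ SF, orb σ x ∈ NT := by
      intro x hxm
      rw [hSF, Set.Finite.mem_toFinset] at hxm
      rw [hNT, Set.Finite.mem_toFinset]
      exact orb_mem_nt hxm
    rw [Finset.card_eq_sum_card_fiberwise hmap]
    apply Finset.sum_congr rfl
    intro O hO
    rw [hNT, Set.Finite.mem_toFinset] at hO
    have hOfin := nt_finite hσ hO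
    have : SF.filter (fun x => orb σ x = O) = hOfin.toFinset := by
      ext x
      simp only [Finset.mem_filter, hSF, Set.Finite.mem_toFinset, Set.mem_setOf_eq]
      constructor
      · rintro ⟨_, rfl⟩
        exact self_mem_orb x
      · intro hxO
        exact ⟨moved_of_mem_nt hO hxO, (orb_eq_of_mem_nt hO hxO).symm⟩
    rw [this, ← Set.ncard_eq_toFinset_card O hOfin]
  -- (b) split into positive and negative orbits
  have hb : ∑ O ∈ NT, O.ncard = ∑ O ∈ PO, O.ncard + ∑ O ∈ NO, O.ncard := by
    rw [← Finset.sum_filter_add_sum_filter_not NT (fun O => negSet O = O)]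
    have e1 : NT.filter (fun O => negSet O = O) = NO := by
      ext O
      rw [Finset.mem_filter, hNT, Set.Finite.mem_toFinset, hNO, Set.Finite.mem_toFinset]
      exact Iff.rfl
    have e2 : NT.filter (fun O => ¬negSet O = O) = PO := by
      ext O
      rw [Finset.mem_filter, hNT, Set.Finite.mem_toFinset, hPO, Set.Finite.mem_toFinset]
      exact Iff.rfl
    rw [e1, e2]
    omega
  -- (c) |support| = 2 |positive support|
  have hc : SF.card = 2 * Pfin.card := by
    have hun : SF = Pfin ∪ Pfin.image Neg.neg := by
      ext x
      rw [hSF, Set.Finite.mem_toFinset, Finset.mem_union, hPfin, Finset.mem_filter,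
        Finset.mem_image]
      constructor
      · intro hxm
        obtain ⟨hxa, hx0⟩ := moved_abs hσ hxm
        have hxa' := abs_le.mp hxa
        by_cases hp : 1 ≤ x
        · exact Or.inl ⟨Finset.mem_Icc.mpr ⟨hp, hxa'.2⟩, hxm⟩
        · refine Or.inr ⟨-x, Finset.mem_filter.mpr ⟨Finset.mem_Icc.mpr ⟨by omega, by omega⟩, ?_⟩,
            by omega⟩
          intro hcx
          rw [hσ.1 x] at hcx
          exact hxm (by omega)
      · rintro (⟨_, hxm⟩ | ⟨y, hy, rfl⟩)
        · exact hxm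
        · have hym := (Finset.mem_filter.mp hy).2
          intro hcx
          rw [hσ.1 y] at hcx
          exact hym (by omega)
    have hdisj : Disjoint Pfin (Pfin.image Neg.neg) := by
      rw [Finset.disjoint_left]
      intro a ha hb
      obtain ⟨y, hy, hya⟩ := Finset.mem_image.mp hb
      have h1 := Finset.mem_Icc.mp (Finset.mem_filter.mp ha).1
      have h2 := Finset.mem_Icc.mp (Finset.mem_filter.mp hy).1
      omega
    rw [hun, Finset.card_union_of_disjoint hdisj,
      Finset.card_image_of_injective _ neg_injective]
    omega
  -- (d) sum over positive orbits
  have hd : ∑ O ∈ PO, (O.ncard - 1) + PO.card = ∑ O ∈ PO, O.ncard := by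
    rw [Finset.card_eq_sum_ones PO, ← Finset.sum_add_distrib]
    apply Finset.sum_congr rfl
    intro O hO
    rw [hPO, Set.Finite.mem_toFinset] at hO
    have := nt_two_le_ncard hσ hO.1
    omega
  -- (e) evenness of positive sum
  have he : Even (∑ O ∈ PO, (O.ncard - 1)) := by
    apply even_sum_inv PO negSet (fun O => O.ncard - 1)
    · intro O hO
      rw [hPO, Set.Finite.mem_toFinset] at hO ⊢
      refine ⟨negSet_mem_nt hσ hO.1, ?_⟩
      rw [negSet_negSet]
      exact fun hcc => hO.2 hcc.symm
    · intro O _; exact negSet_negSet O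
    · intro O hO
      rw [hPO, Set.Finite.mem_toFinset] at hO
      exact hO.2
    · intro O _; rw [ncard_negSet]
  -- (f) 2 normPlus
  have hf : 2 * normPlus σ = ∑ O ∈ PO, (O.ncard - 1) := by
    rw [normPlus, finsum_mem_eq_finite_toFinset_sum _ hposfin]
    obtain ⟨c, hcc⟩ := he
    rw [← hPO] at *
    rw [hcc]
    omega
  -- (g) 2 sizeMinus
  have hg : 2 * sizeMinus σ = ∑ O ∈ NO, O.ncard := by
    rw [sizeMinus, finsum_mem_eq_finite_toFinset_sum _ hnegfin, ← hNO, Finset.mul_sum]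
    apply Finset.sum_congr rfl
    intro O hO
    rw [hNO, Set.Finite.mem_toFinset] at hO
    have hOfin := nt_finite hσ hO.1
    have heO : Even O.ncard := by
      rw [Set.ncard_eq_toFinset_card O hOfin]
      have := even_sum_inv hOfin.toFinset Neg.neg (fun _ => 1)
        (by
          intro x hxm
          rw [Set.Finite.mem_toFinset] at hxm ⊢
          rw [← hO.2]
          exact mem_negSet.mpr (by rw [neg_neg]; exact hxm))
        (fun x _ => neg_neg x)
        (by
          intro x hxm
          rw [Set.Finite.mem_toFinset] at hxm
          have := (moved_abs hσ (moved_of_mem_nt hO.1 hxm)).2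
          omega)
        (fun x _ => rfl)
      rwa [Finset.sum_const, Nat.smul_one_eq_cast, Nat.cast_id] at this
    obtain ⟨c2, hc2⟩ := heO
    omega
  -- (h) positive orbits come in pairs indexed by Trep
  have hh : PO.card = 2 * Trep.card := by
    have hmap : ∀ O ∈ PO, leastPos O ∈ Trep := by
      intro O hO
      rw [hPO, Set.Finite.mem_toFinset] at hO
      have hsp := leastPos_spec (leastPos_exists hσ hO.1)
      set t := leastPos O with ht
      obtain ⟨⟨ht0, htO⟩, hlb⟩ := hsp
      have htcase : O = orb σ t ∨ O = negSet (orb σ t) := by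
        rcases htO with h | h
        · exact Or.inl (orb_eq_of_mem_nt hO.1 h)
        · right
          rw [negSet_orb hσ]
          exact orb_eq_of_mem_nt hO.1 h
      have htm : σ t ≠ t := by
        rcases htO with h | h
        · exact moved_of_mem_nt hO.1 h
        · have := moved_of_mem_nt hO.1 h
          intro hcx
          rw [hσ.1 t] at this
          exact this (by omega)
      have htn : t ≤ (n:ℤ) := by
        rcases htO with h | h
        · have := (moved_abs hσ (moved_of_mem_nt hO.1 h)).1
          rcases abs_cases t with hh | hh <;> omega
        · have := (moved_abs hσ (moved_of_mem_nt hO.1 h)).1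
          rcases abs_cases (-t) with hh | hh <;> omega
      have htneg : ¬σ.SameCycle t (-t) := by
        intro hcyc
        have hor : negSet (orb σ t) = orb σ t := by
          rw [negSet_orb hσ]
          exact (orb_eq_of_sameCycle hcyc).symm
        rcases htcase with h | h
        · exact hO.2 (by rw [h]; exact hor)
        · rw [hor] at h
          exact hO.2 (by rw [h]; exact hor)
      have htmin : ∀ s : ℤ, 1 ≤ s → s < t →
          ¬σ.SameCycle t s ∧ ¬σ.SameCycle t (-s) := by
        intro s hs1 hs2
        constructor
        · intro hcyc
          have hsA : 0 < s ∧ (s ∈ O ∨ -s ∈ O) := by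
            refine ⟨by omega, ?_⟩
            rcases htcase with h | h
            · exact Or.inl (by rw [h]; exact hcyc)
            · refine Or.inr ?_
              rw [h, negSet_orb hσ]
              exact sameCycle_neg hσ hcyc
          have := hlb s hsA
          omega
        · intro hcyc
          have hsA : 0 < s ∧ (s ∈ O ∨ -s ∈ O) := by
            refine ⟨by omega, ?_⟩
            rcases htcase with h | h
            · exact Or.inr (by rw [h]; exact hcyc)
            · refine Or.inl ?_
              rw [h, negSet_orb hσ]
              have := sameCycle_neg hσ hcyc
              rwa [neg_neg] at this
          have := hlb s hsA
          omega
      rw [hTrep, Finset.mem_filter, Finset.mem_Icc]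
      exact ⟨⟨by omega, htn⟩, htm, htneg, htmin⟩
    rw [Finset.card_eq_sum_card_fiberwise hmap]
    have hfib : ∀ t ∈ Trep, (PO.filter (fun O => leastPos O = t)).card = 2 := by
      intro t htT
      rw [hTrep, Finset.mem_filter, Finset.mem_Icc] at htT
      obtain ⟨⟨ht1, ht2⟩, htm, htneg, htmin⟩ := htT
      have hOt : orb σ t ∈ ntOrbits σ := orb_mem_nt htm
      have hdistinct : negSet (orb σ t) ≠ orb σ t := orb_pos_of_not_neg hσ htm htneg
      have hlb : ∀ (O' : Set ℤ), (O' = orb σ t ∨ O' = negSet (orb σ t)) →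
          ∀ s : ℤ, (0 < s ∧ (s ∈ O' ∨ -s ∈ O')) → t ≤ s := by
        rintro O' hcase s ⟨hs0, hsO⟩
        by_contra hcx
        push_neg at hcx
        have hsc : σ.SameCycle t s ∨ σ.SameCycle t (-s) := by
          rcases hcase with rfl | rfl
          · rcases hsO with h | h
            · exact Or.inl h
            · exact Or.inr h
          · rcases hsO with h | h
            · rw [negSet_orb hσ] at h
              right
              have := sameCycle_neg hσ h
              rwa [neg_neg] at this
            · rw [negSet_orb hσ] at h
              left
              have := sameCycle_neg hσ h
              rwa [neg_neg, neg_neg] at this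
        have := htmin s (by omega) hcx
        tauto
      have hl1 : leastPos (orb σ t) = t := by
        apply leastPos_eq
        exact ⟨⟨by omega, Or.inl (self_mem_orb t)⟩, hlb _ (Or.inl rfl)⟩
      have hl2 : leastPos (negSet (orb σ t)) = t := by
        apply leastPos_eq
        refine ⟨⟨by omega, Or.inr (mem_negSet.mpr (by rw [neg_neg]; exact self_mem_orb t))⟩,
          hlb _ (Or.inr rfl)⟩
      have hfeq : PO.filter (fun O => leastPos O = t)
          = {orb σ t, negSet (orb σ t)} := by
        ext O
        rw [Finset.mem_filter, Finset.mem_insert, Finset.mem_singleton]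
        constructor
        · rintro ⟨hOP, hOl⟩
          rw [hPO, Set.Finite.mem_toFinset] at hOP
          have hsp := leastPos_spec (leastPos_exists hσ hOP.1)
          rw [hOl] at hsp
          rcases hsp.1.2 with h | h
          · exact Or.inl (orb_eq_of_mem_nt hOP.1 h)
          · right
            rw [negSet_orb hσ]
            exact orb_eq_of_mem_nt hOP.1 h
        · rintro (rfl | rfl)
          · refine ⟨?_, hl1⟩
            rw [hPO, Set.Finite.mem_toFinset]
            exact ⟨hOt, hdistinct⟩
          · refine ⟨?_, hl2⟩
            rw [hPO, Set.Finite.mem_toFinset]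
            refine ⟨negSet_mem_nt hσ hOt, ?_⟩
            rw [negSet_negSet]
            exact fun hcc => hdistinct hcc.symm
      rw [hfeq, Finset.card_insert_of_notMem (by
          rw [Finset.mem_singleton]
          exact fun hcc => hdistinct hcc.symm),
        Finset.card_singleton]
    rw [Finset.sum_congr rfl hfib, Finset.sum_const, smul_eq_mul]
    omega
  -- (i) Tset splits
  have hi : (Tset n σ).card = Tfix.card + Trep.card := by
    have hun : Tset n σ = Tfix ∪ Trep := by
      ext t
      rw [mem_Tset, Finset.mem_union, hTfix, hTrep, Finset.mem_filter, Finset.mem_filter,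
        Finset.mem_Icc]
      tauto
    have hdisj : Disjoint Tfix Trep := by
      rw [Finset.disjoint_left]
      intro a ha hb
      exact (Finset.mem_filter.mp hb).2.1 (Finset.mem_filter.mp ha).2
    rw [hun, Finset.card_union_of_disjoint hdisj]
  -- (j) Tfix + Pfin = n
  have hj : Tfix.card + Pfin.card = n := by
    have := Finset.card_filter_add_card_filter_not
      (s := Finset.Icc (1:ℤ) n) (p := fun t => σ t = t)
    rw [← hTfix] at this
    have hicc : (Finset.Icc (1:ℤ) n).card = n := by
      rw [Int.card_Icc]
      simp
    rw [hicc] at this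
    rw [← this, hPfin]
  omega

/-- the reflection length of σ ∈ B(n), i.e. the least k such that σ is a
product of k reflections of B(n), equals ‖ρ⁺‖ + |ρ⁻|. -/
theorem reflection_length_eq (n : ℕ) (σ : Equiv.Perm ℤ) (hσ : σ ∈ Bset n) :
    IsLeast {k : ℕ | ∃ r : Fin k → Equiv.Perm ℤ,
        (∀ t, IsRefl n (r t)) ∧ (List.ofFn r).prod = σ}
      (normPlus σ + sizeMinus σ) := by
  have hfr := finrank_Kn hσ
  have hcount := count_lemma hσ
  have hlow : ∀ k ∈ {k : ℕ | ∃ r : Fin k → Equiv.Perm ℤ,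
      (∀ t, IsRefl n (r t)) ∧ (List.ofFn r).prod = σ}, normPlus σ + sizeMinus σ ≤ k := by
    rintro k ⟨r, hr, hprod⟩
    have hb := prod_refl_bound (n := n) (List.ofFn r) (by
      intro s hs
      rw [List.mem_ofFn] at hs
      obtain ⟨t, rfl⟩ := hs
      exact hr t)
    rw [hprod] at hb
    have hlen : (List.ofFn r).length = k := List.length_ofFn (f := r)
    omega
  constructor
  · obtain ⟨k, r, h1, h2, h3⟩ :=
      exists_fact (n := n) n σ hσ (Nat.sub_le _ _)
    have hk : k = normPlus σ + sizeMinus σ :=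
      le_antisymm (by omega) (hlow k ⟨r, h1, h2⟩)
    subst hk
    exact ⟨r, h1, h2⟩
  · exact hlow

end TypeB
end
end

section
/- Let M,N ∈ ℕ with M+N ≥ 1 and ε ∈ {1,−1}. Let V be a complex vector space with basis e₁⁺,…,e_M⁺, e₁⁻,…,e_N⁻, and define for g = (g₁,…,g_n;τ) ∈ B(n) of cycle type (ρ⁺,ρ⁻) the linear map ω_n(g) on V^{⊗n} by ω_n(g)(f₁⊗…⊗f_n) = ε^{‖ρ⁺‖+‖ρ⁻‖} c₁(f_{τ⁻¹(1)})⊗…⊗c_n(f_{τ⁻¹(n)}), where c_i fixes every e_j⁺ and sends every e_j⁻ to g_i·e_j⁻. Then ω_n is a representation of B(n) on V^{⊗n}, and for every g of cycle type (ρ⁺,ρ⁻) its normalized character satisfies Tr ω_n(g)/Tr ω_n(id) = (ε/(M+N))^{‖ρ⁺‖+‖ρ⁻‖}·((M−N)/(M+N))^{ℓ(ρ⁻)} = φ_{q₊,q₋}(g) with q₊ = ε/(M+N), q₋ = (M−N)/(M+N). -/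
/-!
STATEMENT 5: the two-parameter Schur–Weyl representation of the hyperoctahedral group
B(n) = ℤ₂ ≀ S_n on V^{⊗n}, where V has basis e₁⁺,…,e_M⁺,e₁⁻,…,e_N⁻.

The element (g₁,…,g_n;τ) acts by
  f₁⊗…⊗f_n ↦ ε^{‖ρ⁺‖+‖ρ⁻‖} c₁(f_{τ⁻¹(1)})⊗…⊗c_n(f_{τ⁻¹(n)}),
where c_i fixes the vectors e_j⁺ and multiplies the vectors e_j⁻ by g_i.  This is a
representation whose normalized character is φ_{q₊,q₋} with q₊ = ε/(M+N),
q₋ = (M−N)/(M+N).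

V^{⊗n} is encoded by its basis indexed by functions Fin n → (Fin M ⊕ Fin N), and the
linear action by the corresponding matrices.
-/

noncomputable section

namespace TypeB

/-- An element of the hyperoctahedral group B(n) in the signed model ℤ₂ ≀ S_n:
a vector of signs together with a permutation. -/
abbrev WB (n : ℕ) := (Fin n → ℤˣ) × Equiv.Perm (Fin n)

/-- Wreath-product multiplication: (g;τ)(g';τ') = ((gᵢ g'_{τ⁻¹(i)})ᵢ ; ττ'). -/
def wmul {n : ℕ} (a b : WB n) : WB n :=
  (fun i => a.1 i * b.1 (a.2⁻¹ i), a.2 * b.2)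

/-- The identity element of B(n). -/
def wone (n : ℕ) : WB n := (fun _ => 1, 1)

/-- The set of all orbits (cycles, including fixed points) of a permutation of Fin n. -/
def orbitsOf {n : ℕ} (τ : Equiv.Perm (Fin n)) : Set (Set (Fin n)) :=
  {O | ∃ i : Fin n, O = {j | τ.SameCycle i j}}

/-- The number of cycles of τ (fixed points included), i.e. ℓ(ρ⁺)+ℓ(ρ⁻). -/
def cycCount {n : ℕ} (τ : Equiv.Perm (Fin n)) : ℕ := (orbitsOf τ).ncard

/-- ‖ρ⁺‖+‖ρ⁻‖ = n − (number of cycles of τ). -/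
def expo {n : ℕ} (x : WB n) : ℕ := n - cycCount x.2

/-- ℓ(ρ⁻): the number of negative cycles, i.e. cycles c of τ with ∏_{a∈c} g_a = −1. -/
def negCyc {n : ℕ} (x : WB n) : ℕ :=
  {O ∈ orbitsOf x.2 | (∏ᶠ j ∈ O, x.1 j) = -1}.ncard

/-- The basis of V^{⊗n}: functions assigning to each tensor position a basis vector of V,
the basis of V being indexed by Fin M ⊕ Fin N (left = e⁺-vectors, right = e⁻-vectors). -/
abbrev TIdx (M N n : ℕ) := Fin n → (Fin M) ⊕ (Fin N)

/-- The matrix of ω_n(g₁,…,g_n;τ) on V^{⊗n} in the basis indexed by `TIdx M N n`: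
the basis vector e_b is sent to ε^{‖ρ⁺‖+‖ρ⁻‖} · ∏_i (sign picked up by c_i) · e_{b∘τ⁻¹}. -/
def rep (M N : ℕ) (ε : ℤ) {n : ℕ} (x : WB n) :
    Matrix (TIdx M N n) (TIdx M N n) ℂ :=
  fun a b =>
    if a = fun i => b (x.2⁻¹ i) then
      (ε : ℂ) ^ expo x *
        ∏ i : Fin n, (if (b (x.2⁻¹ i)).isRight then ((x.1 i : ℤ) : ℂ) else 1)
    else 0

/- Auxiliary development -/
section Aux
open Equiv Equiv.Perm

variable {n : ℕ}

def scSetoid (σ : Equiv.Perm (Fin n)) : Setoid (Fin n) :=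
  ⟨σ.SameCycle, ⟨SameCycle.refl σ, SameCycle.symm, SameCycle.trans⟩⟩

def Qt (σ : Equiv.Perm (Fin n)) := Quotient (scSetoid σ)

instance (σ : Equiv.Perm (Fin n)) : Fintype (Qt σ) :=
  @Quotient.fintype _ _ (scSetoid σ) (fun _ _ => Classical.dec _)

instance (σ : Equiv.Perm (Fin n)) : DecidableEq (Qt σ) := Classical.decEq _

def cls (σ : Equiv.Perm (Fin n)) (i : Fin n) : Qt σ := Quotient.mk (scSetoid σ) i

lemma cls_surj (σ : Equiv.Perm (Fin n)) : Function.Surjective (cls σ) :=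
  fun q => Quotient.inductionOn q (fun i => ⟨i, rfl⟩)

lemma cls_eq_iff {σ : Equiv.Perm (Fin n)} {i j : Fin n} :
    cls σ i = cls σ j ↔ σ.SameCycle i j :=
  ⟨fun h => Quotient.exact h, fun h => Quotient.sound h⟩

lemma cls_out_eq {σ : Equiv.Perm (Fin n)} (q : Qt σ) : cls σ q.out = q :=
  Quotient.out_eq q

def fib (σ : Equiv.Perm (Fin n)) (q : Qt σ) : Finset (Fin n) :=
  Finset.univ.filter (fun i => cls σ i = q)

lemma mem_fib {σ : Equiv.Perm (Fin n)} {q : Qt σ} {i : Fin n} :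
    i ∈ fib σ q ↔ cls σ i = q := by simp [fib]

def Phi (σ : Equiv.Perm (Fin n)) : Qt σ → Set (Fin n) :=
  Quotient.lift (fun i => {j | σ.SameCycle i j}) (by
    intro i j h
    ext k
    exact ⟨fun hk => (SameCycle.symm h).trans hk, fun hk => h.trans hk⟩)

lemma Phi_cls (σ : Equiv.Perm (Fin n)) (i : Fin n) :
    Phi σ (cls σ i) = {j | σ.SameCycle i j} := rfl

lemma orbitsOf_eq_range (σ : Equiv.Perm (Fin n)) :
    orbitsOf σ = Set.range (Phi σ) := by
  ext O
  constructor
  · rintro ⟨i, rfl⟩; exact ⟨cls σ i, rfl⟩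
  · rintro ⟨q, rfl⟩
    obtain ⟨i, rfl⟩ := cls_surj σ q
    exact ⟨i, rfl⟩

lemma Phi_inj (σ : Equiv.Perm (Fin n)) : Function.Injective (Phi σ) := by
  intro q q' h
  obtain ⟨i, rfl⟩ := cls_surj σ q
  obtain ⟨j, rfl⟩ := cls_surj σ q'
  have : i ∈ Phi σ (cls σ j) := by rw [← h]; exact SameCycle.refl σ i
  exact (cls_eq_iff.2 this).symm

lemma Phi_eq_fib (σ : Equiv.Perm (Fin n)) (q : Qt σ) :
    Phi σ q = ↑(fib σ q) := by
  obtain ⟨i, rfl⟩ := cls_surj σ q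
  ext j
  simp only [Phi_cls, Set.mem_setOf_eq, Finset.coe_filter, fib, Finset.mem_univ, true_and,
    Set.mem_setOf_eq]
  exact ⟨fun h => cls_eq_iff.2 h.symm, fun h => (cls_eq_iff.1 h).symm⟩

lemma cycCount_eq_card (σ : Equiv.Perm (Fin n)) :
    cycCount σ = Fintype.card (Qt σ) := by
  rw [cycCount, orbitsOf_eq_range, ← Set.image_univ,
    Set.ncard_image_of_injective _ (Phi_inj σ), Set.ncard_univ, Nat.card_eq_fintype_card]

lemma card_Qt_le (σ : Equiv.Perm (Fin n)) : Fintype.card (Qt σ) ≤ n := by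
  simpa using Fintype.card_le_of_surjective (cls σ) (cls_surj σ)

lemma card_Qt_one : Fintype.card (Qt (1 : Equiv.Perm (Fin n))) = n := by
  have hb : Function.Bijective (cls (1 : Equiv.Perm (Fin n))) := by
    refine ⟨fun i j h => ?_, cls_surj _⟩
    simpa using cls_eq_iff.1 h
  simpa using (Fintype.card_of_bijective hb).symm

lemma eq_of_sameCycle_of_fixed {σ : Equiv.Perm (Fin n)} {i j : Fin n}
    (h : σ.SameCycle i j) (hi : σ i = i) : j = i := by
  obtain ⟨k, hk⟩ := h
  rw [← hk, zpow_apply_eq_self_of_apply_eq_self hi]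

def toFixSum (σ : Equiv.Perm (Fin n)) :
    Qt σ → {i : Fin n // σ i = i} ⊕ {c // c ∈ σ.cycleFactorsFinset} :=
  Quotient.lift
    (fun i =>
      if h : σ i = i then Sum.inl ⟨i, h⟩
      else Sum.inr ⟨σ.cycleOf i, by
        rw [cycleOf_mem_cycleFactorsFinset_iff]; exact mem_support.2 h⟩)
    (by
      intro i j hij
      by_cases hi : σ i = i
      · obtain rfl := eq_of_sameCycle_of_fixed hij hi
        rfl
      · have hj : ¬ σ j = j := fun hjj => hi (by
          rw [eq_of_sameCycle_of_fixed (SameCycle.symm hij) hjj]; exact hjj)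
        show (if h : σ i = i then _ else _) = (if h : σ j = j then _ else _)
        rw [dif_neg hi, dif_neg hj]
        exact congrArg Sum.inr (Subtype.ext (SameCycle.cycleOf_eq hij)))

lemma toFixSum_mk (σ : Equiv.Perm (Fin n)) (i : Fin n) :
    toFixSum σ (cls σ i) =
      if h : σ i = i then Sum.inl ⟨i, h⟩
      else Sum.inr ⟨σ.cycleOf i, by
        rw [cycleOf_mem_cycleFactorsFinset_iff]; exact mem_support.2 h⟩ := rfl

lemma toFixSum_bij (σ : Equiv.Perm (Fin n)) : Function.Bijective (toFixSum σ) := by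
  constructor
  · intro q q' h
    obtain ⟨i, rfl⟩ := cls_surj σ q
    obtain ⟨j, rfl⟩ := cls_surj σ q'
    rw [toFixSum_mk, toFixSum_mk] at h
    by_cases hi : σ i = i <;> by_cases hj : σ j = j
    · rw [dif_pos hi, dif_pos hj] at h
      simp only [Sum.inl.injEq, Subtype.mk.injEq] at h
      exact congrArg (cls σ) h
    · rw [dif_pos hi, dif_neg hj] at h; exact absurd h (by simp)
    · rw [dif_neg hi, dif_pos hj] at h; exact absurd h (by simp)
    · rw [dif_neg hi, dif_neg hj] at h
      simp only [Sum.inr.injEq, Subtype.mk.injEq] at h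
      have : j ∈ (σ.cycleOf i).support := by
        rw [h, mem_support_cycleOf_iff]
        exact ⟨SameCycle.refl σ j, mem_support.2 hj⟩
      exact cls_eq_iff.2 (mem_support_cycleOf_iff.1 this).1
  · rintro (⟨i, h⟩ | ⟨c, hc⟩)
    · exact ⟨cls σ i, by rw [toFixSum_mk, dif_pos h]⟩
    · obtain ⟨a, ha1, -⟩ := (mem_cycleFactorsFinset_iff.1 hc).1
      have hmoves : σ a ≠ a := by
        have := (mem_cycleFactorsFinset_iff.1 hc).2 a (mem_support.2 ha1)
        rw [← this]; exact ha1
      refine ⟨cls σ a, ?_⟩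
      rw [toFixSum_mk, dif_neg hmoves]
      exact congrArg Sum.inr (Subtype.ext (cycle_is_cycleOf (mem_support.2 ha1) hc).symm)

lemma card_Qt_eq (σ : Equiv.Perm (Fin n)) :
    Fintype.card (Qt σ) = (n - σ.support.card) + Multiset.card σ.cycleType := by
  rw [Fintype.card_of_bijective (toFixSum_bij σ), Fintype.card_sum]
  congr 1
  · rw [Fintype.card_subtype]
    have : Finset.filter (fun i => σ i = i) Finset.univ = σ.supportᶜ := by
      ext i; simp [mem_support]
    rw [this, Finset.card_compl, Fintype.card_fin]
  · rw [Fintype.card_coe, Equiv.Perm.cycleType]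
    simp

lemma card_le_sum_cycleType (σ : Equiv.Perm (Fin n)) :
    Multiset.card σ.cycleType ≤ σ.cycleType.sum := by
  have h := Multiset.card_nsmul_le_sum (s := σ.cycleType) (a := 2)
    (fun x hx => two_le_of_mem_cycleType hx)
  simp only [smul_eq_mul] at h
  omega

lemma neg_one_pow_sub (σ : Equiv.Perm (Fin n)) :
    ((-1 : ℂ)) ^ (n - Fintype.card (Qt σ)) = ((Equiv.Perm.sign σ : ℤ) : ℂ) := by
  have hsupp : σ.support.card ≤ n := by simpa using Finset.card_le_univ σ.support
  have hsum := Equiv.Perm.sum_cycleType σ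
  have hk := card_le_sum_cycleType σ
  rw [card_Qt_eq]
  have h1 : n - ((n - σ.support.card) + Multiset.card σ.cycleType)
      = σ.cycleType.sum - Multiset.card σ.cycleType := by omega
  rw [h1]
  have h2 : (-1 : ℂ) ^ (σ.cycleType.sum - Multiset.card σ.cycleType)
      = (-1 : ℂ) ^ (σ.cycleType.sum + Multiset.card σ.cycleType) := by
    have h3 : σ.cycleType.sum + Multiset.card σ.cycleType
        = (σ.cycleType.sum - Multiset.card σ.cycleType) + 2 * Multiset.card σ.cycleType := by
      omega
    rw [h3, pow_add, pow_mul]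
    norm_num
  rw [h2, Equiv.Perm.sign_of_cycleType]
  push_cast
  ring

lemma neg_one_pow_expo (x : WB n) :
    ((-1 : ℂ)) ^ (expo x) = ((Equiv.Perm.sign x.2 : ℤ) : ℂ) := by
  rw [expo, cycCount_eq_card]
  exact neg_one_pow_sub x.2

lemma eps_pow_wmul {ε : ℤ} (hε : ε = 1 ∨ ε = -1) (x y : WB n) :
    ((ε : ℂ)) ^ (expo (wmul x y)) = (ε : ℂ) ^ (expo x) * (ε : ℂ) ^ (expo y) := by
  rcases hε with rfl | rfl
  · simp
  · push_cast
    rw [neg_one_pow_expo (wmul x y), neg_one_pow_expo x, neg_one_pow_expo y]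
    have : (wmul x y).2 = x.2 * y.2 := rfl
    rw [this, Equiv.Perm.sign_mul]
    push_cast
    ring

lemma expo_wone : expo (wone n) = 0 := by
  have : (wone n).2 = (1 : Equiv.Perm (Fin n)) := rfl
  rw [expo, this, cycCount_eq_card, card_Qt_one, Nat.sub_self]

/-- The sign of the cycle through class `q`. -/
def Sgn (x : WB n) (q : Qt x.2) : ℤˣ := ∏ i ∈ fib x.2 q, x.1 i

def negQ (x : WB n) : ℕ := (Finset.univ.filter (fun q => Sgn x q = -1)).card

def posQ (x : WB n) : ℕ := (Finset.univ.filter (fun q => ¬ Sgn x q = -1)).card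

lemma negQ_add_posQ (x : WB n) : negQ x + posQ x = Fintype.card (Qt x.2) := by
  rw [negQ, posQ, Finset.card_filter_add_card_filter_not, Finset.card_univ]

lemma negCyc_eq_negQ (x : WB n) : negCyc x = negQ x := by
  rw [negCyc]
  have h1 : {O ∈ orbitsOf x.2 | (∏ᶠ j ∈ O, x.1 j) = -1}
      = Phi x.2 '' {q | (∏ᶠ j ∈ Phi x.2 q, x.1 j) = -1} := by
    rw [orbitsOf_eq_range]
    ext O
    constructor
    · rintro ⟨⟨q, rfl⟩, hP⟩; exact ⟨q, hP, rfl⟩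
    · rintro ⟨q, hq, rfl⟩; exact ⟨⟨q, rfl⟩, hq⟩
  rw [h1, Set.ncard_image_of_injective _ (Phi_inj x.2)]
  have h2 : {q | (∏ᶠ j ∈ Phi x.2 q, x.1 j) = -1}
      = ↑(Finset.univ.filter (fun q => Sgn x q = -1)) := by
    ext q
    simp only [Set.mem_setOf_eq, Finset.coe_filter, Finset.mem_univ, true_and]
    rw [Phi_eq_fib, finprod_mem_coe_finset]
    rfl
  rw [h2, Set.ncard_coe_finset, negQ]

lemma const_on_cycle {β : Type*} {σ : Equiv.Perm (Fin n)} {b : Fin n → β}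
    (hb : ∀ i, b (σ⁻¹ i) = b i) {i j : Fin n} (h : σ.SameCycle i j) : b i = b j := by
  have hσ : ∀ i, b (σ i) = b i := fun i => by
    have h2 := hb (σ i)
    rw [Equiv.Perm.inv_def, Equiv.symm_apply_apply] at h2
    exact h2.symm
  obtain ⟨k, hk⟩ := h
  rw [← hk]
  suffices H : ∀ k : ℤ, b ((σ ^ k) i) = b i by exact (H k).symm
  intro k
  induction k using Int.induction_on with
  | zero => simp
  | succ k ih =>
      have hdec : σ ^ ((k : ℤ) + 1) = σ * σ ^ (k : ℤ) := by
        rw [add_comm, zpow_add, zpow_one]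
      rw [hdec, Equiv.Perm.mul_apply, hσ, ih]
  | pred k ih =>
      have hdec : σ ^ (-(k : ℤ) - 1) = σ⁻¹ * σ ^ (-(k : ℤ)) := by
        rw [sub_eq_add_neg, add_comm, zpow_add, zpow_neg_one]
      rw [hdec, Equiv.Perm.mul_apply, hb, ih]
end Aux

section Main
open Equiv Equiv.Perm
variable {n : ℕ}

lemma rep_wone (M N : ℕ) (ε : ℤ) : rep M N ε (wone n) = 1 := by
  ext a b
  simp only [rep, Matrix.one_apply]
  rw [show (wone n).2⁻¹ = 1 from by simp [wone], expo_wone]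
  simp [wone]

lemma trace_rep (M N : ℕ) (ε : ℤ) (x : WB n) :
    (rep M N ε x).trace
      = (ε : ℂ) ^ expo x *
          (((M : ℂ) - (N : ℂ)) ^ negQ x * ((M : ℂ) + (N : ℂ)) ^ posQ x) := by
  classical
  set σ := x.2 with hσ
  have key : ∀ (b : TIdx M N n), (b = fun i => b (σ⁻¹ i)) →
      ∀ {i j : Fin n}, σ.SameCycle i j → b i = b j := by
    intro b hb i j h
    exact const_on_cycle (fun i => (congrFun hb i).symm) h
  have step1 : (rep M N ε x).trace
      = ∑ b ∈ Finset.univ.filter (fun b : TIdx M N n => b = fun i => b (σ⁻¹ i)),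
          (ε:ℂ)^expo x * ∏ i : Fin n,
            (if (b (σ⁻¹ i)).isRight then ((x.1 i : ℤ):ℂ) else 1) := by
    rw [Matrix.trace, Finset.sum_filter]
    simp only [Matrix.diag, rep]
    rfl
  have hsc : ∀ i : Fin n, σ.SameCycle i (σ⁻¹ i) := by
    intro i
    refine ⟨-1, ?_⟩
    simp
  have step2 : ∑ b ∈ Finset.univ.filter (fun b : TIdx M N n => b = fun i => b (σ⁻¹ i)),
          (ε:ℂ)^expo x * ∏ i : Fin n,
            (if (b (σ⁻¹ i)).isRight then ((x.1 i : ℤ):ℂ) else 1)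
      = ∑ c : Qt σ → (Fin M ⊕ Fin N),
          (ε:ℂ)^expo x * ∏ i : Fin n,
            (if (c (cls σ i)).isRight then ((x.1 i : ℤ):ℂ) else 1) := by
    refine Finset.sum_bij' (fun b _ => fun q : Qt σ => b q.out)
      (fun c _ => fun i => c (cls σ i)) (fun _ _ => Finset.mem_univ _) ?_ ?_ ?_ ?_
    · intro c _
      rw [Finset.mem_filter]
      refine ⟨Finset.mem_univ _, funext fun i => ?_⟩
      show c (cls σ i) = c (cls σ (σ⁻¹ i))
      rw [cls_eq_iff.2 (hsc i)]
    · intro b hb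
      funext i
      show b ((cls σ i).out) = b i
      exact key b (Finset.mem_filter.1 hb).2 (cls_eq_iff.1 (cls_out_eq (cls σ i)))
    · intro c _
      funext q
      show c (cls σ q.out) = c q
      rw [cls_out_eq]
    · intro b hb
      dsimp only
      congr 1
      refine Finset.prod_congr rfl fun i _ => ?_
      have h1 : b (σ⁻¹ i) = b ((cls σ i).out) := by
        refine key b (Finset.mem_filter.1 hb).2 ?_
        exact (hsc i).symm.trans ((cls_eq_iff.1 (cls_out_eq (cls σ i))).symm)
      rw [h1]
  have inner : ∀ (c : Qt σ → (Fin M ⊕ Fin N)),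
      ∏ i : Fin n, (if (c (cls σ i)).isRight then ((x.1 i : ℤ):ℂ) else 1)
        = ∏ q : Qt σ, (if (c q).isRight then ((Sgn x q : ℤ):ℂ) else 1) := by
    intro c
    rw [← Finset.prod_fiberwise_of_maps_to (g := cls σ) (t := Finset.univ)
      (fun i _ => Finset.mem_univ _)]
    refine Finset.prod_congr rfl fun q _ => ?_
    rw [Finset.prod_congr rfl (fun i hi => by rw [(Finset.mem_filter.1 hi).2])]
    by_cases hcq : (c q).isRight
    · simp only [if_pos hcq]
      rw [show (Sgn x q : ℤˣ) = ∏ i ∈ fib σ q, x.1 i from rfl]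
      push_cast
      rfl
    · simp [hcq]
  have sumv : ∀ (z : ℂ), ∑ v : Fin M ⊕ Fin N, (if v.isRight then z else 1)
      = (M:ℂ) + (N:ℂ) * z := by
    intro z
    rw [Fintype.sum_sum_type]
    simp [Finset.sum_const, nsmul_eq_mul, mul_comm]
  have step4 : ∑ c : Qt σ → (Fin M ⊕ Fin N),
        ∏ q : Qt σ, (if (c q).isRight then ((Sgn x q : ℤ):ℂ) else 1)
      = ∏ q : Qt σ, ((M:ℂ) + (N:ℂ) * ((Sgn x q : ℤ):ℂ)) := by
    have hps := Finset.prod_univ_sum (κ := fun _ : Qt σ => Fin M ⊕ Fin N)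
      (fun _ => Finset.univ)
      (fun q v => if v.isRight then ((Sgn x q : ℤ):ℂ) else 1)
    rw [Fintype.piFinset_univ] at hps
    exact hps.symm.trans (Finset.prod_congr rfl fun q _ => sumv _)
  have step6 : ∏ q : Qt σ, ((M:ℂ) + (N:ℂ) * ((Sgn x q : ℤ):ℂ))
      = ((M:ℂ) - (N:ℂ)) ^ negQ x * ((M:ℂ) + (N:ℂ)) ^ posQ x := by
    have hterm : ∀ q : Qt σ, (M:ℂ) + (N:ℂ) * ((Sgn x q : ℤ):ℂ)
        = if Sgn x q = -1 then (M:ℂ) - (N:ℂ) else (M:ℂ) + (N:ℂ) := by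
      intro q
      rcases Int.units_eq_one_or (Sgn x q) with h | h <;> rw [h] <;> simp <;> ring
    rw [Finset.prod_congr rfl (fun q _ => hterm q), Finset.prod_ite,
      Finset.prod_const, Finset.prod_const]
    rfl
  rw [step1, step2, ← Finset.mul_sum]
  congr 1
  rw [Finset.sum_congr rfl (fun c _ => inner c), step4, step6]

lemma rep_mul (M N : ℕ) (ε : ℤ) (hε : ε = 1 ∨ ε = -1) (x y : WB n) :
    rep M N ε (wmul x y) = rep M N ε x * rep M N ε y := by
  ext a c
  rw [Matrix.mul_apply]
  have hsum : ∑ b : TIdx M N n, rep M N ε x a b * rep M N ε y b c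
      = rep M N ε x a (fun i => c (y.2⁻¹ i)) *
        ((ε:ℂ)^expo y * ∏ i : Fin n,
          (if (c (y.2⁻¹ i)).isRight then ((y.1 i : ℤ):ℂ) else 1)) := by
    rw [Finset.sum_congr rfl (fun b _ => by
      rw [show rep M N ε y b c =
        if b = (fun i => c (y.2⁻¹ i)) then
          (ε:ℂ)^expo y * ∏ i : Fin n,
            (if (c (y.2⁻¹ i)).isRight then ((y.1 i : ℤ):ℂ) else 1)
        else 0 from rfl, mul_ite, mul_zero])]
    rw [Finset.sum_ite_eq' Finset.univ (fun i => c (y.2⁻¹ i))]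
    simp
  rw [hsum]
  have hinv : ∀ i : Fin n, (wmul x y).2⁻¹ i = y.2⁻¹ (x.2⁻¹ i) := by
    intro i
    show (x.2 * y.2)⁻¹ i = y.2⁻¹ (x.2⁻¹ i)
    rw [mul_inv_rev, Equiv.Perm.mul_apply]
  have hfst : ∀ i : Fin n, (wmul x y).1 i = x.1 i * y.1 (x.2⁻¹ i) := fun i => rfl
  simp only [rep, hinv, hfst]
  by_cases hc : a = fun i => c (y.2⁻¹ (x.2⁻¹ i))
  · rw [if_pos hc, if_pos hc]
    rw [eps_pow_wmul hε x y, mul_mul_mul_comm]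
    congr 1
    rw [show (∏ i : Fin n, (if (c (y.2⁻¹ i)).isRight then ((y.1 i : ℤ):ℂ) else 1))
        = ∏ i : Fin n, (if (c (y.2⁻¹ (x.2⁻¹ i))).isRight then ((y.1 (x.2⁻¹ i) : ℤ):ℂ) else 1) from
      (Equiv.prod_comp (x.2⁻¹ : Equiv.Perm (Fin n))
        (fun j => if (c (y.2⁻¹ j)).isRight then ((y.1 j : ℤ):ℂ) else 1)).symm]
    rw [← Finset.prod_mul_distrib]
    refine Finset.prod_congr rfl fun i _ => ?_
    by_cases hR : (c (y.2⁻¹ (x.2⁻¹ i))).isRight <;>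
      simp only [hR, if_true, if_false, Units.val_mul] <;> push_cast <;> ring
  · rw [if_neg hc, if_neg hc, zero_mul]
end Main

/-- ω_n is a representation of B(n) on V^{⊗n} and its normalized character
is the signed reflection function φ_{q₊,q₋}(g) = q₊^{‖ρ⁺‖+‖ρ⁻‖} q₋^{ℓ(ρ⁻)} with
q₊ = ε/(M+N) and q₋ = (M−N)/(M+N). -/
theorem schur_weyl_typeB (M N : ℕ) (hMN : 1 ≤ M + N) (ε : ℤ) (hε : ε = 1 ∨ ε = -1)
    (n : ℕ) :
    -- ω_n is multiplicative and unital, i.e. a representation of B(n) = ℤ₂ ≀ S_n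
    (∀ x y : WB n, rep M N ε (wmul x y) = rep M N ε x * rep M N ε y) ∧
    rep M N ε (wone n) = 1 ∧
    -- and its normalized character is φ_{q₊,q₋}
    (∀ x : WB n,
      (rep M N ε x).trace / (rep M N ε (wone n)).trace
        = ((ε : ℂ) / ((M : ℂ) + (N : ℂ))) ^ expo x *
            (((M : ℂ) - (N : ℂ)) / ((M : ℂ) + (N : ℂ))) ^ negCyc x) := by
  have hS : ((M:ℂ) + (N:ℂ)) ≠ 0 := by
    have h0 : ((M + N : ℕ) : ℂ) ≠ 0 := Nat.cast_ne_zero.2 (by omega)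
    push_cast at h0
    exact h0
  refine ⟨rep_mul M N ε hε, rep_wone M N ε, fun x => ?_⟩
  rw [trace_rep, rep_wone, Matrix.trace_one]
  have hcard : ((Fintype.card (TIdx M N n) : ℕ) : ℂ) = ((M:ℂ) + (N:ℂ)) ^ n := by
    rw [Fintype.card_fun, Fintype.card_sum, Fintype.card_fin, Fintype.card_fin, Fintype.card_fin]
    push_cast
    ring
  rw [hcard, negCyc_eq_negQ]
  have hn : n = expo x + negQ x + posQ x := by
    have h1 := negQ_add_posQ x
    have h2 := card_Qt_le x.2
    have h3 : expo x = n - Fintype.card (Qt x.2) := by rw [expo, cycCount_eq_card]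
    omega
  rw [show ((M:ℂ)+(N:ℂ))^n = ((M:ℂ)+(N:ℂ))^(expo x + negQ x + posQ x) from by rw [← hn]]
  rw [div_pow, div_pow, pow_add, pow_add]
  field_simp

end TypeB
end
end
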